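/- arXiv:1606.08412 — 6 statements merged into one kernel-verified Lean document; each statement's English description precedes it below -/
import Mathlib

section
/- Let T(z) be the formal power series with T(0)=1 satisfying T(z) = 1 + z·T(z)^t for an integer t ≥ 2. Then ln T(z) = Σ_{n≥1} (1/(t·n))·C(t·n, n)·z^n as formal power series. -/
open Finset PowerSeries


lemma vand_q (a b m : ℕ) :
    ∑ j ∈ range (m+1), (a.choose j : ℚ) * (b.choose (m-j)) = ((a+b).choose m : ℚ) := by
  rw [Nat.add_choose_eq, Finset.Nat.sum_antidiagonal_eq_sum_range_succ_mk]
  push_cast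
  rfl

lemma vand_q' (a b m : ℕ) (ha : 1 ≤ a) (hm : 1 ≤ m) :
    ∑ j ∈ range (m+1), (j : ℚ) * (a.choose j) * (b.choose (m-j)) =
      a * ((a + b - 1).choose (m-1) : ℚ) := by
  obtain ⟨a, rfl⟩ := Nat.exists_eq_succ_of_ne_zero (by omega : a ≠ 0)
  obtain ⟨m, rfl⟩ := Nat.exists_eq_succ_of_ne_zero (by omega : m ≠ 0)
  rw [Finset.sum_range_succ']
  simp only [Nat.cast_zero, zero_mul, add_zero, Nat.succ_sub_one]
  have h1 : ∀ i : ℕ, ((i+1 : ℕ) : ℚ) * ((a+1).choose (i+1)) = ((a+1 : ℕ) : ℚ) * (a.choose i) := by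
    intro i
    have h := congrArg (Nat.cast : ℕ → ℚ) (Nat.add_one_mul_choose_eq a i)
    push_cast at h ⊢
    linarith [h]
  calc ∑ i ∈ range (m+1), ((i+1 : ℕ) : ℚ) * ((a+1).choose (i+1)) * (b.choose (m+1-(i+1)))
      = ∑ i ∈ range (m+1), ((a+1 : ℕ) : ℚ) * ((a.choose i) * (b.choose (m-i))) := by
        refine Finset.sum_congr rfl fun i _ => ?_
        rw [← mul_assoc, h1 i, Nat.succ_sub_succ, mul_assoc]
    _ = ((a+1 : ℕ) : ℚ) * ((a+b).choose m) := by rw [← Finset.mul_sum, vand_q]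
    _ = ((a+1 : ℕ) : ℚ) * ((a + 1 + b - 1).choose m) := by
        congr 3
        omega

lemma alt_range (N : ℕ) (hN : 1 ≤ N) : ∀ n, 1 ≤ n →
    ∑ i ∈ range n, (-1:ℚ)^i * (N.choose i) = (-1)^(n-1) * ((N-1).choose (n-1)) := by
  intro n hn
  induction n with
  | zero => omega
  | succ m ih =>
    rcases Nat.eq_zero_or_pos m with hm | hm
    · subst hm; simp
    · rw [Finset.sum_range_succ, ih hm, Nat.succ_sub_one]
      obtain ⟨m, rfl⟩ := Nat.exists_eq_succ_of_ne_zero (by omega : m ≠ 0)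
      obtain ⟨N, rfl⟩ := Nat.exists_eq_succ_of_ne_zero (by omega : N ≠ 0)
      rw [Nat.succ_sub_one, Nat.succ_sub_one, Nat.choose_succ_succ N m]
      push_cast
      rw [pow_succ]
      ring

lemma alt_sum (N n : ℕ) (hN : 1 ≤ N) (hn : 1 ≤ n) :
    ∑ k ∈ Finset.Icc 1 n, (-1:ℚ)^(k+1) * (N.choose (n-k)) = ((N-1).choose (n-1)) := by
  have h1 : ∑ k ∈ Finset.Icc 1 n, (-1:ℚ)^(k+1) * (N.choose (n-k)) =
      ∑ i ∈ range n, (-1:ℚ)^(i+2) * (N.choose (n-(1+i))) := by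
    rw [← Finset.Ico_add_one_right_eq_Icc, Finset.sum_Ico_eq_sum_range]
    rw [show n + 1 - 1 = n from rfl]
    refine Finset.sum_congr rfl fun x _ => ?_
    congr 2
    omega
  rw [h1]
  have h2 : ∀ i ∈ range n, (-1:ℚ)^(i+2) * (N.choose (n-(1+i))) =
      (fun j => (-1:ℚ)^(n-1-j) * (N.choose j)) (n-1-i) := by
    intro i hi
    simp only [Finset.mem_range] at hi
    have he : n - 1 - (n - 1 - i) = i := by omega
    show _ = (-1:ℚ)^(n-1-(n-1-i)) * (N.choose (n-1-i))
    have h4 : n - (1+i) = n - 1 - i := by omega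
    rw [he, h4, pow_add]
    norm_num
  rw [Finset.sum_congr rfl h2, Finset.sum_range_reflect (fun j => (-1:ℚ)^(n-1-j) * (N.choose j)) n]
  have h3 : ∀ j ∈ range n, (-1:ℚ)^(n-1-j) * (N.choose j) =
      (-1:ℚ)^(n-1) * ((-1:ℚ)^j * (N.choose j)) := by
    intro j hj
    simp only [Finset.mem_range] at hj
    have : (n-1-j) + j = n - 1 := by omega
    calc (-1:ℚ)^(n-1-j) * (N.choose j)
        = (-1:ℚ)^(n-1-j) * ((-1)^j * (-1)^j) * (N.choose j) := by
          rw [← pow_add]; norm_num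
      _ = (-1:ℚ)^((n-1-j)+j) * ((-1:ℚ)^j * (N.choose j)) := by rw [pow_add]; ring
      _ = _ := by rw [this]
  rw [Finset.sum_congr rfl h3, ← Finset.mul_sum, alt_range N hN n hn, ← mul_assoc, ← pow_add]
  have : (-1:ℚ)^((n-1)+(n-1)) = 1 := by
    rw [pow_add, ← pow_add]; norm_num
  rw [this, one_mul]

noncomputable def cc (t n k : ℕ) : ℚ :=
  if n = 0 then (if k = 0 then 1 else 0)
  else if k ≤ n then (k : ℚ)/n * ((t*n).choose (n-k)) else 0



lemma key (t : ℕ) (ht : 1 ≤ t) (n k' : ℕ) :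
    ∑ j ∈ range (t+1), ((t.choose j : ℚ)) * cc t n (k'+j) = cc t (n+1) (k'+1) := by
  rcases Nat.eq_zero_or_pos n with hn | hn
  · subst hn
    rcases Nat.eq_zero_or_pos k' with hk | hk
    · subst hk
      rw [Finset.sum_eq_single 0]
      · simp only [cc]; norm_num
      · intro j _ hj
        rw [cc, if_pos rfl, if_neg (by omega), mul_zero]
      · intro h; simp at h
    · rw [Finset.sum_eq_zero, eq_comm, cc, if_neg (by omega : ¬ (0:ℕ) + 1 = 0), if_neg (by omega)]
      intro j _
      rw [cc, if_pos rfl, if_neg (by omega), mul_zero]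
  · by_cases hk : k' ≤ n
    · set m := n - k' with hm
      rcases Nat.eq_zero_or_pos m with hm0 | hm0
      · -- k' = n
        have hkn : k' = n := by omega
        rw [Finset.sum_eq_single 0]
        · rw [cc, cc, if_neg (by omega : ¬ n = 0), if_neg (by omega : ¬ n + 1 = 0),
            if_pos (by omega : k' + 0 ≤ n), if_pos (by omega : k' + 1 ≤ n + 1),
            show n - (k' + 0) = 0 from by omega, show n + 1 - (k' + 1) = 0 from by omega,
            Nat.choose_zero_right, Nat.choose_zero_right, Nat.choose_zero_right]
          rw [hkn]
          have hn0 : (n : ℚ) ≠ 0 := by positivity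
          have hn1 : ((n : ℚ)+1) ≠ 0 := by positivity
          field_simp
          simp
        · intro j hj hj0
          rw [cc, if_neg (by omega : ¬ n = 0), if_neg (by omega), mul_zero]
        · intro h; simp at h
      · -- main case, 1 ≤ m
        have step1 : ∀ j ∈ range (t+1), ((t.choose j : ℚ)) * cc t n (k'+j) =
            (t.choose j : ℚ) * (if j ≤ m then ((k'+j : ℚ))/n * ((t*n).choose (m-j)) else 0) := by
          intro j _
          rw [cc, if_neg (by omega : ¬ n = 0)]
          congr 1
          by_cases h : j ≤ m
          · rw [if_pos (by omega : k' + j ≤ n), if_pos h,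
              show n - (k' + j) = m - j from by omega]
            push_cast
            ring
          · rw [if_neg (by omega), if_neg h]
        rw [Finset.sum_congr rfl step1]
        -- extend both sums to range (t+m+1)
        have e1 : ∑ j ∈ range (t+1),
              (t.choose j : ℚ) * (if j ≤ m then ((k'+j : ℚ))/n * ((t*n).choose (m-j)) else 0)
            = ∑ j ∈ range (t+m+1),
              (t.choose j : ℚ) * (if j ≤ m then ((k'+j : ℚ))/n * ((t*n).choose (m-j)) else 0) := by
          apply Finset.sum_subset
          · exact Finset.range_subset_range.mpr (by omega)
          · intro j _ hj
            simp only [Finset.mem_range, not_lt] at hj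
            rw [Nat.choose_eq_zero_of_lt (by omega), Nat.cast_zero, zero_mul]
        have e2 : ∑ j ∈ range (t+m+1),
              (t.choose j : ℚ) * (if j ≤ m then ((k'+j : ℚ))/n * ((t*n).choose (m-j)) else 0)
            = ∑ j ∈ range (m+1),
              (t.choose j : ℚ) * (((k'+j : ℚ))/n * ((t*n).choose (m-j))) := by
          rw [← Finset.sum_subset (Finset.range_subset_range.mpr (by omega : m+1 ≤ t+m+1))]
          · apply Finset.sum_congr rfl
            intro j hj
            simp only [Finset.mem_range] at hj
            rw [if_pos (by omega)]
          · intro j _ hj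
            simp only [Finset.mem_range, not_lt] at hj
            rw [if_neg (by omega), mul_zero]
        rw [e1, e2]
        -- split the sum
        have split : ∑ j ∈ range (m+1),
              (t.choose j : ℚ) * (((k'+j : ℚ))/n * ((t*n).choose (m-j)))
            = ((k' : ℚ)/n) * (∑ j ∈ range (m+1), (t.choose j : ℚ) * ((t*n).choose (m-j)))
              + (1/(n:ℚ)) * (∑ j ∈ range (m+1), (j : ℚ) * (t.choose j) * ((t*n).choose (m-j))) := by
          rw [Finset.mul_sum, Finset.mul_sum, ← Finset.sum_add_distrib]
          apply Finset.sum_congr rfl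
          intro j _
          ring
        rw [split, vand_q, vand_q' t (t*n) m ht hm0]
        -- now pure arithmetic
        have hD := Nat.add_one_mul_choose_eq (t + t*n - 1) (m - 1)
        have hsucc1 : (t + t*n - 1) + 1 = t + t*n := by omega
        have hsucc2 : (m-1) + 1 = m := by omega
        rw [hsucc1, hsucc2] at hD
        have hDq : ((t + t*n : ℕ) : ℚ) * ((t + t*n - 1).choose (m-1)) =
            ((t + t*n).choose m : ℚ) * m := by exact_mod_cast congrArg (Nat.cast : ℕ → ℚ) hD
        rw [cc, if_neg (by omega : ¬ n + 1 = 0), if_pos (by omega : k' + 1 ≤ n + 1)]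
        have harr1 : (t*n + t).choose (m) = (t + t*n).choose m := by rw [Nat.add_comm]
        have harr2 : t * (n+1) = t + t*n := by ring
        rw [harr2, show n + 1 - (k'+1) = m from by omega]
        have hmq : (m : ℚ) = (n : ℚ) - k' := by
          have : (m : ℚ) = ((n - k' : ℕ) : ℚ) := by rw [hm]
          rw [this, Nat.cast_sub hk]
        have hn0 : (n : ℚ) ≠ 0 := by positivity
        have hn1 : ((n : ℚ)+1) ≠ 0 := by positivity
        have htn : ((t + t*n : ℕ) : ℚ) ≠ 0 := by
          push_cast; positivity
        set C : ℚ := ((t + t*n).choose m : ℚ) with hC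
        set D : ℚ := ((t + t*n - 1).choose (m-1) : ℚ) with hDdef
        have hDval : D = C * m / ((t + t*n : ℕ) : ℚ) := by
          rw [eq_div_iff htn]
          linarith [hDq]
        rw [hDval, hmq]
        push_cast
        field_simp
        ring
    · -- k' > n : everything vanishes
      rw [Finset.sum_eq_zero, eq_comm, cc, if_neg (by omega : ¬ n + 1 = 0), if_neg (by omega)]
      intro j _
      rw [cc, if_neg (by omega : ¬ n = 0), if_neg (by omega), mul_zero]



lemma coeff_S (t : ℕ) (ht : 1 ≤ t) (S : PowerSeries ℚ)
    (hS : S = X * (1+S)^t) : ∀ n k, PowerSeries.coeff n (S^k) = cc t n k := by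
  have hS0 : constantCoeff S = 0 := by
    rw [hS]; simp
  intro n
  induction n with
  | zero =>
    intro k
    rw [coeff_zero_eq_constantCoeff, map_pow, hS0, cc, if_pos rfl]
    rcases Nat.eq_zero_or_pos k with hk | hk
    · subst hk; simp
    · rw [zero_pow (by omega), if_neg (by omega)]
  | succ n ih =>
    intro k
    rcases Nat.eq_zero_or_pos k with hk | hk
    · subst hk
      rw [pow_zero, cc, if_neg (by omega), if_pos (by omega)]
      simp
    · obtain ⟨k, rfl⟩ := Nat.exists_eq_succ_of_ne_zero (by omega : k ≠ 0)
      have hstep : S^(k+1) = X * ((1+S)^t * S^k) := by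
        have h2 : S^(k+1) = S * S^k := by ring
        rw [h2]
        nth_rewrite 1 [hS]
        ring
      rw [hstep, coeff_succ_X_mul]
      have hexp : (1+S)^t * S^k = ∑ j ∈ range (t+1),
          (t.choose j : ℚ⟦X⟧) * S^(k+j) := by
        rw [add_comm (1:ℚ⟦X⟧) S, add_pow, Finset.sum_mul]
        apply Finset.sum_congr rfl
        intro j _
        rw [one_pow, mul_one, pow_add]
        ring
      rw [hexp, map_sum]
      have hterm : ∀ j ∈ range (t+1),
          PowerSeries.coeff n ((t.choose j : ℚ⟦X⟧) * S^(k+j)) =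
            (t.choose j : ℚ) * cc t n (k+j) := by
        intro j _
        rw [← nsmul_eq_mul, map_nsmul, ih (k+j), nsmul_eq_mul]
      rw [Finset.sum_congr rfl hterm, key t ht n k]



/-- For `T = 1 + z·T^t` in `ℚ⟦z⟧` (`t ≥ 2`, `T(0)=1`), the formal
logarithm `ln T = Σ_{k≥1} (−1)^{k+1}(T−1)^k/k` satisfies
`[z^n] ln T = (1/(t·n))·C(t·n, n)` for all `n ≥ 1`.  Since `T − 1` has zero constant
term, `[z^n]` of the full logarithm equals `[z^n]` of the partial sum up to `k = n`. -/
theorem coeff_log_tree_series (t : ℕ) (ht : 2 ≤ t) (T : PowerSeries ℚ)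
    (hT : T = 1 + PowerSeries.X * T ^ t) (n : ℕ) (hn : 1 ≤ n) :
    PowerSeries.coeff (R := ℚ) n
        (∑ k ∈ Finset.Icc 1 n, ((-1 : ℚ) ^ (k + 1) / k) • (T - 1) ^ k) =
      1 / (t * n) * ((t * n).choose n) := by
  have hS : T - 1 = X * (1 + (T - 1))^t := by
    have h1 : (1 : ℚ⟦X⟧) + (T - 1) = T := by ring
    rw [h1]
    linear_combination hT
  have hc := coeff_S t (by omega) (T - 1) hS
  rw [map_sum]
  have hterm : ∀ k ∈ Finset.Icc 1 n,
      PowerSeries.coeff n (((-1 : ℚ) ^ (k + 1) / k) • (T - 1) ^ k) =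
        (1/(n:ℚ)) * ((-1:ℚ)^(k+1) * ((t*n).choose (n-k))) := by
    intro k hk
    simp only [Finset.mem_Icc] at hk
    rw [LinearMap.map_smul, hc n k, smul_eq_mul, cc, if_neg (by omega), if_pos hk.2]
    have hk0 : (k : ℚ) ≠ 0 := by
      have : 0 < k := hk.1
      positivity
    have hn0 : (n : ℚ) ≠ 0 := by
      have : 0 < n := hn
      positivity
    field_simp
  rw [Finset.sum_congr rfl hterm, ← Finset.mul_sum,
    alt_sum (t*n) n (by nlinarith) hn]
  -- 1/n * C(tn-1, n-1) = 1/(tn) * C(tn, n)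
  have htn1 : 1 ≤ t*n := by nlinarith
  have hD := Nat.add_one_mul_choose_eq (t*n - 1) (n - 1)
  rw [show (t*n - 1) + 1 = t*n from by omega, show (n-1) + 1 = n from by omega] at hD
  have hDq : ((t*n : ℕ) : ℚ) * ((t*n-1).choose (n-1)) = ((t*n).choose n : ℚ) * n := by
    exact_mod_cast congrArg (Nat.cast : ℕ → ℚ) hD
  have hn0 : (n : ℚ) ≠ 0 := by
    have : 0 < n := hn
    positivity
  have htn0 : ((t*n : ℕ) : ℚ) ≠ 0 := by
    have : 0 < t*n := by nlinarith
    positivity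
  push_cast at hDq htn0
  rw [div_mul_eq_mul_div, one_mul, div_mul_eq_mul_div, one_mul,
    div_eq_div_iff hn0 htn0]
  linear_combination hDq
end

section
/- As formal power series identities, (Σ_{k≥0} C(3k/2, k)/(k/2+1) · z^k) · (Σ_{k≥0} C(3k/2, k)/(k/2+1) · (−z)^k) = Σ_{n≥0} (1/(n+1))·C(3n+1, n) · z^{2n}, where C(3k/2,k) is interpreted via the generalized binomial coefficient (generalized binomial series of order 3/2). -/
open PowerSeries

/-- Generalized binomial coefficient `C(x,k) = x(x−1)⋯(x−k+1)/k!` for rational `x`. -/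
def genBinom (x : ℚ) (k : ℕ) : ℚ := (∏ i ∈ Finset.range k, (x - i)) / (k.factorial : ℚ)

/-- The generalized binomial series of order 3/2:
`T(z) = Σ_{k≥0} C(3k/2,k)/(k/2+1)·z^k`. -/
noncomputable def knuthT : PowerSeries ℚ :=
  PowerSeries.mk fun k => genBinom (3 * k / 2) k / ((k : ℚ) / 2 + 1)

/-- `T(−z)`. -/
noncomputable def knuthTneg : PowerSeries ℚ :=
  PowerSeries.mk fun k => (-1 : ℚ) ^ k * (genBinom (3 * k / 2) k / ((k : ℚ) / 2 + 1))

/-- rising-style product `x(x-1)⋯(x-n+1)` -/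
def pr (x : ℚ) (n : ℕ) : ℚ := ∏ i ∈ Finset.range n, (x - i)

lemma pr_zero (x : ℚ) : pr x 0 = 1 := by simp [pr]

lemma pr_succ (x : ℚ) (n : ℕ) : pr x (n+1) = pr x n * (x - n) := by
  simp [pr, Finset.prod_range_succ]

lemma pr_succ' (x : ℚ) (n : ℕ) : pr x (n+1) = x * pr (x-1) n := by
  rw [pr, Finset.prod_range_succ']
  simp only [Nat.cast_zero, sub_zero, mul_comm]
  congr 1
  · unfold pr; apply Finset.prod_congr rfl; intro i _; push_cast; ring

lemma genBinom_eq (x : ℚ) (n : ℕ) : genBinom x n = pr x n / (n.factorial : ℚ) := rfl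

lemma fact_ne (n : ℕ) : ((n.factorial : ℚ)) ≠ 0 := by
  exact_mod_cast Nat.factorial_ne_zero n

lemma genBinom_zero (x : ℚ) : genBinom x 0 = 1 := by simp [genBinom]

lemma genBinom_one (x : ℚ) : genBinom x 1 = x := by simp [genBinom]

lemma genBinom_succ (x : ℚ) (n : ℕ) :
    genBinom x (n+1) = genBinom x n * (x - n) / (n+1) := by
  rw [genBinom_eq, genBinom_eq, pr_succ, Nat.factorial_succ]
  push_cast
  rw [div_mul_eq_mul_div, div_div, div_eq_div_iff (by positivity) (by positivity)]
  ring

lemma genBinom_pascal (x : ℚ) (n : ℕ) :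
    genBinom x (n+1) = genBinom (x-1) (n+1) + genBinom (x-1) n := by
  have key : pr x (n+1) = pr (x-1) (n+1) + ((n:ℚ)+1) * pr (x-1) n := by
    rw [pr_succ', pr_succ]; ring
  rw [genBinom_eq, genBinom_eq, genBinom_eq, key, Nat.factorial_succ]
  push_cast
  have h1 : ((n:ℚ)+1) ≠ 0 := by positivity
  field_simp

/-- `Q_n(a) = C(a+bn, n)` -/
def QQ (b a : ℚ) (n : ℕ) : ℚ := genBinom (a + b*n) n

/-- Gould polynomials `P_n(a) = (a/(a+bn)) C(a+bn,n)` -/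
def PP (b a : ℚ) : ℕ → ℚ
  | 0 => 1
  | (n+1) => QQ b a (n+1) - b * QQ b (a+b-1) n

lemma QQ_zero (b a : ℚ) : QQ b a 0 = 1 := by simp [QQ, genBinom_zero]

lemma PP_zero' (b a : ℚ) : PP b a 0 = 1 := rfl

lemma QQ_pascal (b a : ℚ) (n : ℕ) :
    QQ b a (n+1) = QQ b (a-1) (n+1) + QQ b (a+b-1) n := by
  have h := genBinom_pascal (a + b*(n+1 : ℕ)) n
  have e1 : (a + b*((n:ℕ)+1 : ℕ) : ℚ) - 1 = (a-1) + b*((n+1 : ℕ) : ℚ) := by push_cast; ring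
  have e2 : (a + b*((n:ℕ)+1 : ℕ) : ℚ) - 1 = (a+b-1) + b*(n : ℚ) := by push_cast; ring
  unfold QQ
  rw [h]
  congr 1
  · rw [← e1]
  · rw [← e2]

lemma PP_pascal (b a : ℚ) (n : ℕ) :
    PP b a (n+1) = PP b (a-1) (n+1) + PP b (a+b-1) n := by
  cases n with
  | zero =>
      show QQ b a 1 - b * QQ b (a+b-1) 0 =
        (QQ b (a-1) 1 - b * QQ b (a-1+b-1) 0) + 1
      simp only [QQ, genBinom_one, genBinom_zero]
      push_cast; ring
  | succ m =>
      show QQ b a (m+2) - b * QQ b (a+b-1) (m+1) =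
        (QQ b (a-1) (m+2) - b * QQ b (a-1+b-1) (m+1)) +
        (QQ b (a+b-1) (m+1) - b * QQ b (a+b-1+b-1) m)
      have h1 : QQ b a (m+2) = QQ b (a-1) (m+2) + QQ b (a+b-1) (m+1) := QQ_pascal b a (m+1)
      have h2 : QQ b (a+b-1) (m+1) = QQ b (a+b-1-1) (m+1) + QQ b (a+b-1+b-1) m :=
        QQ_pascal b (a+b-1) m
      have e : a+b-1-1 = a-1+b-1 := by ring
      rw [h1, h2, e]; ring

lemma PP_prod (b a : ℚ) (n : ℕ) :
    PP b a (n+1) = a * pr (a + b*(n+1 : ℕ) - 1) n / ((n+1).factorial : ℚ) := by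
  show QQ b a (n+1) - b * QQ b (a+b-1) n = _
  unfold QQ
  rw [genBinom_eq, genBinom_eq]
  have e1 : (a + b*((n+1:ℕ)) : ℚ) = (a + b*((n+1:ℕ)) - 1) + 1 := by ring
  have e2 : (a + b - 1 + b*(n:ℚ)) = a + b*((n+1:ℕ):ℚ) - 1 := by push_cast; ring
  rw [e1, pr_succ']
  have e3 : (a + b * ((n+1:ℕ):ℚ) - 1 + 1 - 1) = a + b*((n+1:ℕ):ℚ) - 1 := by ring
  rw [e3, e2, Nat.factorial_succ]
  push_cast
  have h1 : ((n:ℚ)+1) ≠ 0 := by positivity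
  field_simp
  ring

lemma PP_at_zero (b : ℚ) (n : ℕ) : PP b 0 (n+1) = 0 := by
  rw [PP_prod]; simp

lemma PP_one (b a : ℚ) : PP b a 1 = a := by
  rw [PP_prod]; simp [pr_zero]
open Polynomial

def IsPolyFun (f : ℚ → ℚ) : Prop := ∃ p : Polynomial ℚ, ∀ x, f x = p.eval x

lemma IsPolyFun.const (c : ℚ) : IsPolyFun (fun _ => c) := ⟨C c, by simp⟩

lemma IsPolyFun.add {f g} (hf : IsPolyFun f) (hg : IsPolyFun g) :
    IsPolyFun (fun a => f a + g a) := by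
  obtain ⟨p, hp⟩ := hf; obtain ⟨q, hq⟩ := hg
  exact ⟨p + q, fun x => by simp [hp, hq]⟩

lemma IsPolyFun.mul {f g} (hf : IsPolyFun f) (hg : IsPolyFun g) :
    IsPolyFun (fun a => f a * g a) := by
  obtain ⟨p, hp⟩ := hf; obtain ⟨q, hq⟩ := hg
  exact ⟨p * q, fun x => by simp [hp, hq]⟩

lemma IsPolyFun.sub {f g} (hf : IsPolyFun f) (hg : IsPolyFun g) :
    IsPolyFun (fun a => f a - g a) := by
  obtain ⟨p, hp⟩ := hf; obtain ⟨q, hq⟩ := hg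
  exact ⟨p - q, fun x => by simp [hp, hq]⟩

lemma IsPolyFun.affine (d : ℚ) : IsPolyFun (fun a => a + d) := ⟨Polynomial.X + Polynomial.C d, by simp⟩

lemma IsPolyFun.sum {ι : Type*} (s : Finset ι) (F : ι → ℚ → ℚ)
    (h : ∀ i ∈ s, IsPolyFun (F i)) :
    IsPolyFun (fun a => ∑ i ∈ s, F i a) := by
  classical
  induction s using Finset.induction_on with
  | empty => simpa using IsPolyFun.const 0
  | @insert x s' hx ih =>
      simp only [Finset.sum_insert hx]
      exact (h x (Finset.mem_insert_self x s')).add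
        (ih fun i hi => h i (Finset.mem_insert_of_mem hi))

/-- A polynomial function invariant under `a ↦ a - 1` is constant. -/
lemma polyfun_const {f : ℚ → ℚ} (hf : IsPolyFun f)
    (h : ∀ a, f a = f (a - 1)) (a : ℚ) : f a = f 0 := by
  obtain ⟨p, hp⟩ := hf
  have hshift : ∀ x : ℚ, p.eval (x + 1) = p.eval x := by
    intro x
    have := h (x + 1)
    rw [← hp, ← hp]
    simpa [add_sub_cancel_right] using this
  -- r := p - C (p.eval 0) vanishes at all naturals
  set r : Polynomial ℚ := p - Polynomial.C (p.eval 0) with hr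
  have hroot : ∀ n : ℕ, r.eval (n : ℚ) = 0 := by
    intro n
    induction n with
    | zero => simp [hr]
    | succ m ih =>
        have : ((m+1 : ℕ) : ℚ) = (m : ℚ) + 1 := by push_cast; ring
        rw [this]
        simpa [hr, hshift (m : ℚ)] using ih
  have hr0 : r = 0 := by
    by_contra hne
    have hfin := Polynomial.finite_setOf_isRoot hne
    have : Set.Infinite {x : ℚ | r.IsRoot x} := by
      apply Set.Infinite.mono (s := Set.range ((↑·) : ℕ → ℚ))
      · rintro x ⟨n, rfl⟩; exact hroot n
      · exact Set.infinite_range_of_injective Nat.cast_injective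
    exact this hfin
  have : p.eval a = p.eval 0 := by
    have := congrArg (Polynomial.eval a) hr0
    simp [hr, sub_eq_zero] at this
    simp [this]
  rw [hp, hp]; simpa using this

lemma isPolyFun_genBinom (d : ℚ) (k : ℕ) : IsPolyFun (fun a => genBinom (a + d) k) := by
  induction k with
  | zero => simpa [genBinom_zero] using IsPolyFun.const 1
  | succ n ih =>
      have : (fun a => genBinom (a + d) (n+1)) =
          fun a => (genBinom (a + d) n) * ((a + (d - n)) * (1/((n:ℚ)+1))) := by
        funext a
        rw [genBinom_succ]
        push_cast
        ring
      rw [this]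
      exact ih.mul ((IsPolyFun.affine (d - n)).mul (IsPolyFun.const _))

lemma isPolyFun_QQ (b c : ℚ) (k : ℕ) : IsPolyFun (fun a => QQ b (a + c) k) := by
  have : (fun a => QQ b (a + c) k) = fun a => genBinom (a + (c + b*k)) k := by
    funext a; unfold QQ; congr 1; ring
  rw [this]; exact isPolyFun_genBinom _ _

lemma isPolyFun_PP (b c : ℚ) (k : ℕ) : IsPolyFun (fun a => PP b (a + c) k) := by
  cases k with
  | zero => simpa [PP_zero'] using IsPolyFun.const 1
  | succ n =>
      have : (fun a => PP b (a + c) (n+1)) =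
          fun a => QQ b (a + c) (n+1) - (genBinom (a + (c + b - 1 + b*n)) n) * b := by
        funext a
        show QQ b (a+c) (n+1) - b * QQ b (a+c+b-1) n = _
        unfold QQ
        have e : a+c+b-1 + b*(n:ℚ) = a + (c + b - 1 + b*n) := by ring
        rw [e]
        ring
      rw [this]
      exact (isPolyFun_QQ b c (n+1)).sub ((isPolyFun_genBinom _ _).mul (IsPolyFun.const b))

/-- Rothe's convolution identity. -/
theorem rothe (b : ℚ) : ∀ n : ℕ, ∀ a c : ℚ,
    ∑ k ∈ Finset.range (n+1), PP b a k * QQ b c (n-k) = QQ b (a+c) n := by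
  intro n
  induction n with
  | zero => intro a c; simp [PP_zero', QQ_zero]
  | succ n ih =>
      intro a c
      set f : ℚ → ℚ := fun a =>
        (∑ k ∈ Finset.range (n+2), PP b a k * QQ b c (n+1-k)) - QQ b (a+c) (n+1) with hf
      have hstep : ∀ a, f a = f (a - 1) := by
        intro a
        have hsum : ∀ a', ∑ k ∈ Finset.range (n+2), PP b a' k * QQ b c (n+1-k)
            = (∑ j ∈ Finset.range (n+1), PP b a' (j+1) * QQ b c (n-j)) + QQ b c (n+1) := by
          intro a'
          rw [Finset.sum_range_succ']
          congr 1
          · apply Finset.sum_congr rfl; intro j _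
            rw [Nat.succ_sub_succ]
          · simp [PP_zero']
        have key : ∀ j, PP b a (j+1) - PP b (a-1) (j+1) = PP b (a+b-1) j := by
          intro j; have := PP_pascal b a j; linarith [PP_pascal b a j]
        have hQ : QQ b (a+c) (n+1) = QQ b (a+c-1) (n+1) + QQ b (a+c+b-1) n :=
          QQ_pascal b (a+c) n
        have hIH := ih (a+b-1) c
        simp only [hf]
        rw [hsum a, hsum (a-1)]
        have e1 : a - 1 + c = a + c - 1 := by ring
        have e2 : a + b - 1 + c = a + c + b - 1 := by ring
        have expand : (∑ j ∈ Finset.range (n+1), PP b a (j+1) * QQ b c (n-j))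
            - (∑ j ∈ Finset.range (n+1), PP b (a-1) (j+1) * QQ b c (n-j))
            = ∑ j ∈ Finset.range (n+1), PP b (a+b-1) j * QQ b c (n-j) := by
          rw [← Finset.sum_sub_distrib]
          apply Finset.sum_congr rfl
          intro j _
          rw [← sub_mul, key j]
        rw [e1] at *
        rw [hQ]
        have := expand
        rw [hIH, e2] at this
        linarith [this]
      have hpoly : IsPolyFun f := by
        apply IsPolyFun.sub
        · apply IsPolyFun.sum
          intro k _
          have h0 : IsPolyFun (fun a => PP b a k) := by simpa using isPolyFun_PP b 0 k
          exact h0.mul (IsPolyFun.const _)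
        · exact isPolyFun_QQ b c (n+1)
      have hzero : f 0 = 0 := by
        simp only [hf]
        rw [Finset.sum_range_succ']
        simp only [PP_at_zero, zero_mul, Finset.sum_const_zero, zero_add, PP_zero', one_mul]
        simp
      have := polyfun_const hpoly hstep a
      rw [hzero] at this
      have : f a = 0 := this
      simp only [hf] at this
      linarith [this]

/-- The Hagen–Rothe / Gould convolution: `P` is of binomial type. -/
theorem rothe2 (b : ℚ) (n : ℕ) (a c : ℚ) :
    ∑ k ∈ Finset.range (n+1), PP b a k * PP b c (n-k) = PP b (a+c) n := by
  cases n with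
  | zero => simp [PP_zero']
  | succ n =>
      rw [Finset.sum_range_succ]
      have hsplit : ∀ k ∈ Finset.range (n+1), PP b a k * PP b c (n+1-k)
          = PP b a k * QQ b c (n+1-k) - b * (PP b a k * QQ b (c+b-1) (n-k)) := by
        intro k hk
        have hk' : k ≤ n := Nat.lt_succ_iff.mp (Finset.mem_range.mp hk)
        have e : n+1-k = (n-k)+1 := by omega
        rw [e]
        show PP b a k * (QQ b c (n-k+1) - b * QQ b (c+b-1) (n-k)) = _
        ring
      rw [Finset.sum_congr rfl hsplit, Finset.sum_sub_distrib, ← Finset.mul_sum]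
      have h1 : (∑ k ∈ Finset.range (n+1), PP b a k * QQ b c (n+1-k))
          + PP b a (n+1) = QQ b (a+c) (n+1) := by
        have := rothe b (n+1) a c
        rw [Finset.sum_range_succ] at this
        simpa [QQ_zero] using this
      have h2 : ∑ k ∈ Finset.range (n+1), PP b a k * QQ b (c+b-1) (n-k)
          = QQ b (a+c+b-1) n := by
        have := rothe b n a (c+b-1)
        rw [this]; congr 1; ring
      rw [h2]
      have e0 : PP b c (n+1-(n+1)) = 1 := by simp [PP_zero']
      rw [e0, mul_one]
      show _ = QQ b (a+c) (n+1) - b * QQ b (a+c+b-1) n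
      linarith [h1]

noncomputable def Tpow (b a : ℚ) : PowerSeries ℚ := PowerSeries.mk (PP b a)

lemma coeff_Tpow (b a : ℚ) (n : ℕ) : (PowerSeries.coeff n) (Tpow b a) = PP b a n :=
  PowerSeries.coeff_mk n _

lemma Tpow_mul (b a c : ℚ) : Tpow b a * Tpow b c = Tpow b (a+c) := by
  apply PowerSeries.ext; intro n
  rw [PowerSeries.coeff_mul, Finset.Nat.sum_antidiagonal_eq_sum_range_succ_mk]
  simp only [coeff_Tpow]
  exact rothe2 b n a c

lemma constantCoeff_Tpow (b a : ℚ) : PowerSeries.constantCoeff (Tpow b a) = 1 :=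
  PowerSeries.constantCoeff_mk.trans (PP_zero' b a)

/-- The key single-term identity: `P_n(2) - 2 P_n(1) = P_{n-2}(3)` for `b = 3/2`. -/
lemma L6 (n : ℕ) : PP (3/2) 2 n - 2 * PP (3/2) 1 n + (if n = 0 then (1:ℚ) else 0)
    = (if 2 ≤ n then PP (3/2) 3 (n-2) else 0) := by
  match n with
  | 0 => norm_num [PP_zero']
  | 1 => norm_num [PP_one]
  | (m+2) =>
    simp only [if_neg (by omega : ¬ (m+2) = 0), if_pos (by omega : 2 ≤ m+2), add_zero]
    have e : m + 2 - 2 = m := by omega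
    rw [e, PP_prod (3/2) 2 (m+1), PP_prod (3/2) 1 (m+1)]
    set y : ℚ := (3/2) * ((m+2:ℕ):ℚ) with hy
    have e1 : (2:ℚ) + (3/2)*((m+1+1:ℕ):ℚ) - 1 = y + 1 := by rw [hy]; push_cast; ring
    have e2 : (1:ℚ) + (3/2)*((m+1+1:ℕ):ℚ) - 1 = y := by rw [hy]; push_cast; ring
    rw [e1, e2, pr_succ', pr_succ]
    have e3 : y + 1 - 1 = y := by ring
    rw [e3]
    match m with
    | 0 =>
      rw [PP_zero', pr_zero, hy]
      norm_num [Nat.factorial]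
    | (k+1) =>
      rw [PP_prod (3/2) 3 k]
      have e4 : (3:ℚ) + (3/2)*((k+1:ℕ):ℚ) - 1 = y - 1 := by rw [hy]; push_cast; ring
      rw [e4]
      have e5 : pr y (k+1) = y * pr (y-1) k := pr_succ' y k
      rw [e5]
      have hf1 : (((k+1+1+1:ℕ).factorial : ℚ)) = ((k:ℚ)+3)*((k:ℚ)+2)*((k+1:ℕ).factorial : ℚ) := by
        rw [Nat.factorial_succ, Nat.factorial_succ]; push_cast; ring
      rw [hf1]
      have hk1 : ((k+1:ℕ).factorial : ℚ) ≠ 0 := fact_ne _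
      have hk2 : ((k:ℚ)+3) ≠ 0 := by positivity
      have hk3 : ((k:ℚ)+2) ≠ 0 := by positivity
      have hyv : y = (3/2) * ((k:ℚ)+3) := by rw [hy]; push_cast; ring
      rw [hyv]
      field_simp
      push_cast
      ring

/-- `knuthT` is the Gould series for `b = 3/2`, `a = 1`. -/
lemma knuthT_eq : knuthT = Tpow (3/2) 1 := by
  apply PowerSeries.ext; intro k
  rw [show knuthT = PowerSeries.mk fun k => genBinom (3 * k / 2) k / ((k : ℚ) / 2 + 1) from rfl,
    PowerSeries.coeff_mk, coeff_Tpow]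
  cases k with
  | zero => simp [PP_zero', genBinom_zero]
  | succ n =>
    rw [PP_prod]
    have e : (1 : ℚ) + (3/2)*((n+1:ℕ):ℚ) - 1 = 3*((n+1:ℕ):ℚ)/2 := by push_cast; ring
    rw [e, genBinom_eq, pr_succ]
    have hx : (3*((n+1:ℕ):ℚ)/2 - (n:ℚ)) = ((n+1:ℕ):ℚ)/2 + 1 := by push_cast; ring
    rw [hx]
    have h1 : ((n+1:ℕ):ℚ)/2 + 1 ≠ 0 := by push_cast; positivity
    have h2 := fact_ne (n+1)
    field_simp

lemma knuthTneg_eq : knuthTneg = PowerSeries.rescale (-1) knuthT := by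
  apply PowerSeries.ext; intro k
  rw [show knuthTneg = PowerSeries.mk fun k => (-1:ℚ)^k * (genBinom (3 * k / 2) k / ((k : ℚ) / 2 + 1)) from rfl,
    PowerSeries.coeff_mk, PowerSeries.coeff_rescale,
    show knuthT = PowerSeries.mk fun k => genBinom (3 * k / 2) k / ((k : ℚ) / 2 + 1) from rfl,
    PowerSeries.coeff_mk]

/-- The algebraic equation satisfied by `T = B_{3/2}`: `(T-1)^2 = X^2 T^3`. -/
lemma hE : (knuthT - 1)^2 = PowerSeries.X^2 * Tpow (3/2) 3 := by
  rw [knuthT_eq]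
  have h2 : Tpow (3/2) 1 * Tpow (3/2) 1 = Tpow (3/2) 2 := by
    rw [Tpow_mul]; norm_num
  have expand : (Tpow (3/2) 1 - 1)^2
      = Tpow (3/2) 2 - PowerSeries.C 2 * Tpow (3/2) 1 + 1 := by
    rw [← h2]
    rw [map_ofNat PowerSeries.C 2]; ring
  rw [expand]
  apply PowerSeries.ext; intro n
  rw [map_add, map_sub, PowerSeries.coeff_C_mul, PowerSeries.coeff_one,
    PowerSeries.coeff_X_pow_mul', coeff_Tpow, coeff_Tpow, coeff_Tpow]
  exact L6 n

lemma hEneg : (knuthTneg - 1)^2 = PowerSeries.X^2 * PowerSeries.rescale (-1) (Tpow (3/2) 3) := by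
  have := congrArg (PowerSeries.rescale (-1)) hE
  rw [map_pow, map_sub, map_one, map_mul, map_pow, PowerSeries.rescale_X] at this
  rw [knuthTneg_eq, this]
  have : (PowerSeries.C (-1) * PowerSeries.X)^2 = (PowerSeries.X : ℚ⟦X⟧)^2 := by
    rw [mul_pow, ← map_pow]
    norm_num
  rw [this]

lemma constantCoeff_knuthT : PowerSeries.constantCoeff knuthT = 1 := by
  rw [knuthT_eq]; exact constantCoeff_Tpow _ _

lemma constantCoeff_knuthTneg : PowerSeries.constantCoeff knuthTneg = 1 := by
  rw [knuthTneg_eq]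
  rw [← PowerSeries.coeff_zero_eq_constantCoeff, PowerSeries.coeff_rescale]
  simp [PowerSeries.coeff_zero_eq_constantCoeff, constantCoeff_knuthT]

lemma coeff_one_knuthT : PowerSeries.coeff 1 knuthT = 1 := by
  rw [knuthT_eq, coeff_Tpow, PP_one]

lemma coeff_one_knuthTneg : PowerSeries.coeff 1 knuthTneg = -1 := by
  rw [knuthTneg_eq, PowerSeries.coeff_rescale, coeff_one_knuthT]
  norm_num

lemma hE' : (knuthT - 1)^2 = PowerSeries.X^2 * knuthT^3 := by
  have h3 : knuthT^3 = Tpow (3/2) 3 := by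
    rw [knuthT_eq, pow_succ, pow_two, Tpow_mul, Tpow_mul]
    norm_num
  rw [h3]; exact hE

lemma hEneg' : (knuthTneg - 1)^2 = PowerSeries.X^2 * knuthTneg^3 := by
  have h3 : knuthTneg^3 = PowerSeries.rescale (-1) (Tpow (3/2) 3) := by
    rw [knuthTneg_eq, ← map_pow]
    congr 1
    rw [knuthT_eq, pow_succ, pow_two, Tpow_mul, Tpow_mul]
    norm_num
  rw [h3]; exact hEneg

/-- The master equation for the product `P = T(z)T(-z)`. -/
lemma Pmain : (knuthT * knuthTneg) * (1 - PowerSeries.X^2 * (knuthT*knuthTneg))^2 = 1 := by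
  set T := knuthT with hT
  set Tb := knuthTneg with hTb
  set S : ℚ⟦X⟧ := T + Tb with hS0
  set P : ℚ⟦X⟧ := T * Tb with hP0
  have hne : Tb - T ≠ 0 := by
    intro h
    have := congrArg (PowerSeries.coeff 1) h
    rw [map_sub, coeff_one_knuthT, coeff_one_knuthTneg] at this
    norm_num at this
  have hD : (Tb - T) * ((T+Tb)^2 - T*Tb - 2*(T*Tb)*(T+Tb) + (T*Tb)^2) = 0 := by
    linear_combination Tb^3 * hE' - T^3 * hEneg'
  have hKeq : (T+Tb)^2 - T*Tb - 2*(T*Tb)*(T+Tb) + (T*Tb)^2 = 0 := by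
    rcases mul_eq_zero.mp hD with h | h
    · exact absurd h hne
    · exact h
  have h2raw : S^3 - 2*P*S^2 + P^2*S - 3*P*S + 4*P^2 = 2*PowerSeries.X^2*P^3 := by
    rw [hS0, hP0]
    linear_combination Tb^3 * hE' + T^3 * hEneg'
  have hKeq' : S^2 - P - 2*P*S + P^2 = 0 := by
    rw [hS0, hP0]; linear_combination hKeq
  have hK2 : (2*P) * (2*P - S - PowerSeries.X^2*P^2) = 0 := by
    linear_combination h2raw - S * hKeq'
  have hPconst : PowerSeries.constantCoeff P = 1 := by
    rw [hP0, map_mul, constantCoeff_knuthT, constantCoeff_knuthTneg]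
    norm_num
  have h2Pne : (2:ℚ⟦X⟧)*P ≠ 0 := by
    intro h
    have := congrArg (PowerSeries.constantCoeff) h
    rw [map_mul, hPconst, mul_one, map_ofNat] at this
    norm_num at this
  have hSrel : 2*P - S - PowerSeries.X^2*P^2 = 0 := by
    rcases mul_eq_zero.mp hK2 with h | h
    · exact absurd h h2Pne
    · exact h
  have hfin : P * (P*(1 - PowerSeries.X^2*P)^2 - 1) = 0 := by
    linear_combination hKeq' + (S - PowerSeries.X^2*P^2) * hSrel
  have hPne : P ≠ 0 := by
    intro h
    rw [h] at hPconst
    simp at hPconst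
  rcases mul_eq_zero.mp hfin with h | h
  · exact absurd h hPne
  · exact sub_eq_zero.mp h

/-- single-term identity for `b = 3`: `P_n(1) = P_{n-1}(3)` -/
lemma L7 (n : ℕ) : PP 3 1 n
    = (if n = 0 then (1:ℚ) else 0) + (if 1 ≤ n then PP 3 3 (n-1) else 0) := by
  match n with
  | 0 => simp [PP_zero']
  | (m+1) =>
    simp only [if_neg (by omega : ¬ (m+1) = 0), if_pos (by omega : 1 ≤ m+1), zero_add,
      Nat.add_sub_cancel]
    rw [PP_prod]
    match m with
    | 0 => simp [PP_zero', pr_zero]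
    | (k+1) =>
      rw [PP_prod 3 3 k]
      have e1 : (1:ℚ) + 3*((k+1+1:ℕ):ℚ) - 1 = 3*(k:ℚ)+6 := by push_cast; ring
      have e2 : (3:ℚ) + 3*((k+1:ℕ):ℚ) - 1 = 3*(k:ℚ)+5 := by push_cast; ring
      rw [e1, e2]
      have e3 : (3*(k:ℚ)+6) = (3*(k:ℚ)+5) + 1 := by ring
      rw [e3, pr_succ']
      have e4 : (3*(k:ℚ)+5+1-1) = 3*(k:ℚ)+5 := by ring
      rw [e4]
      have hf1 : (((k+1+1:ℕ).factorial : ℚ)) = ((k:ℚ)+2)*((k+1:ℕ).factorial : ℚ) := by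
        rw [Nat.factorial_succ]; push_cast; ring
      rw [hf1]
      have hk1 : ((k+1:ℕ).factorial : ℚ) ≠ 0 := fact_ne _
      have hk2 : ((k:ℚ)+2) ≠ 0 := by positivity
      field_simp
      ring

lemma hU : Tpow 3 1 = 1 + PowerSeries.X * Tpow 3 3 := by
  apply PowerSeries.ext; intro n
  rw [map_add, PowerSeries.coeff_one, ← pow_one (PowerSeries.X : ℚ⟦X⟧),
    PowerSeries.coeff_X_pow_mul', coeff_Tpow, coeff_Tpow]
  exact L7 n

lemma hV : (Tpow 3 2) * (1 - PowerSeries.X * (Tpow 3 2))^2 = 1 := by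
  set U : ℚ⟦X⟧ := Tpow 3 1 with hUdef
  have hU3 : U^3 = Tpow 3 3 := by
    rw [hUdef, pow_succ, pow_two, Tpow_mul, Tpow_mul]; norm_num
  have hU2 : Tpow 3 2 = U^2 := by
    rw [hUdef, pow_two, Tpow_mul]; norm_num
  have hU' : U - PowerSeries.X * U^3 = 1 := by
    rw [hU3]; linear_combination hU
  rw [hU2]
  linear_combination (U - PowerSeries.X*U^3 + 1) * hU'

/-- substitute `X ↦ X^2` -/
noncomputable def ev (f : ℚ⟦X⟧) : ℚ⟦X⟧ :=
  PowerSeries.mk fun n => if Even n then PowerSeries.coeff (n/2) f else 0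

lemma coeff_ev_even (f : ℚ⟦X⟧) (m : ℕ) :
    PowerSeries.coeff (2*m) (ev f) = PowerSeries.coeff m f := by
  rw [ev, PowerSeries.coeff_mk, if_pos ⟨m, by omega⟩]
  have e : 2*m/2 = m := by omega
  rw [e]

lemma coeff_ev_odd (f : ℚ⟦X⟧) (m : ℕ) :
    PowerSeries.coeff (2*m+1) (ev f) = 0 := by
  rw [ev, PowerSeries.coeff_mk, if_neg]
  rw [Nat.even_iff]
  omega

lemma ev_one : ev (1 : ℚ⟦X⟧) = 1 := by
  apply PowerSeries.ext; intro n
  rcases Nat.even_or_odd n with ⟨m, hm⟩ | ⟨m, hm⟩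
  · have hm2 : n = 2*m := by omega
    subst hm2
    rw [coeff_ev_even, PowerSeries.coeff_one, PowerSeries.coeff_one]
    split_ifs <;> first | rfl | omega
  · have hm2 : n = 2*m+1 := by omega
    subst hm2
    rw [coeff_ev_odd, PowerSeries.coeff_one, if_neg (by omega)]

lemma ev_sub (f g : ℚ⟦X⟧) : ev (f - g) = ev f - ev g := by
  apply PowerSeries.ext; intro n
  rw [map_sub, ev, ev, ev, PowerSeries.coeff_mk, PowerSeries.coeff_mk, PowerSeries.coeff_mk,
    map_sub]
  split_ifs <;> ring

lemma ev_add (f g : ℚ⟦X⟧) : ev (f + g) = ev f + ev g := by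
  apply PowerSeries.ext; intro n
  rw [map_add, ev, ev, ev, PowerSeries.coeff_mk, PowerSeries.coeff_mk, PowerSeries.coeff_mk,
    map_add]
  split_ifs <;> ring

lemma sum_range_even_odd (m : ℕ) (h : ℕ → ℚ) :
    ∑ k ∈ Finset.range (2*m+1), h k
      = (∑ t ∈ Finset.range (m+1), h (2*t)) + ∑ t ∈ Finset.range m, h (2*t+1) := by
  induction m with
  | zero => simp
  | succ m ih =>
      have e : 2*(m+1)+1 = (2*m+1) + 1 + 1 := by omega
      rw [e, Finset.sum_range_succ, Finset.sum_range_succ, ih,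
        Finset.sum_range_succ (fun t => h (2*t)) (m+1), Finset.sum_range_succ (fun t => h (2*t+1)) m]
      have e1 : 2*m+1+1 = 2*(m+1) := by omega
      have e2 : 2*m+1 = 2*m+1 := rfl
      rw [e1]
      ring

lemma ev_mul (f g : ℚ⟦X⟧) : ev f * ev g = ev (f * g) := by
  apply PowerSeries.ext; intro n
  rw [PowerSeries.coeff_mul, Finset.Nat.sum_antidiagonal_eq_sum_range_succ_mk]
  rcases Nat.even_or_odd n with ⟨m, hm⟩ | ⟨m, hm⟩
  · have hm2 : n = 2*m := by omega
    subst hm2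
    rw [coeff_ev_even, PowerSeries.coeff_mul, Finset.Nat.sum_antidiagonal_eq_sum_range_succ_mk]
    have e : 2*m+1 = 2*m+1 := rfl
    rw [sum_range_even_odd m (fun k => (PowerSeries.coeff k) (ev f) * (PowerSeries.coeff (2*m - k)) (ev g))]
    have hodd : ∑ t ∈ Finset.range m,
        (PowerSeries.coeff (2*t+1)) (ev f) * (PowerSeries.coeff (2*m - (2*t+1))) (ev g) = 0 := by
      apply Finset.sum_eq_zero; intro t _
      rw [coeff_ev_odd, zero_mul]
    rw [hodd, add_zero]
    apply Finset.sum_congr rfl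
    intro t ht
    have ht' : t ≤ m := by have := Finset.mem_range.mp ht; omega
    have e1 : 2*m - 2*t = 2*(m-t) := by omega
    rw [coeff_ev_even, e1, coeff_ev_even]
  · have hm2 : n = 2*m+1 := by omega
    subst hm2
    rw [coeff_ev_odd]
    apply Finset.sum_eq_zero
    intro k hk
    have hk' : k ≤ 2*m+1 := by
      have := Finset.mem_range.mp hk; omega
    show PowerSeries.coeff k (ev f) * PowerSeries.coeff (2*m+1-k) (ev g) = 0
    rcases Nat.even_or_odd k with ⟨t, htk⟩ | ⟨t, htk⟩
    · have h1 : ¬ Even (2*m+1-k) := by rw [Nat.even_iff]; omega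
      rw [show (PowerSeries.coeff (2*m+1-k)) (ev g) = 0 by
        rw [ev, PowerSeries.coeff_mk, if_neg h1], mul_zero]
    · have h1 : ¬ Even k := by rw [Nat.even_iff]; omega
      rw [show (PowerSeries.coeff k) (ev f) = 0 by
        rw [ev, PowerSeries.coeff_mk, if_neg h1], zero_mul]

lemma ev_X_mul (f : ℚ⟦X⟧) : ev (PowerSeries.X * f) = PowerSeries.X^2 * ev f := by
  apply PowerSeries.ext; intro n
  rw [PowerSeries.coeff_X_pow_mul', ev, PowerSeries.coeff_mk]
  rcases Nat.even_or_odd n with ⟨m, hm⟩ | ⟨m, hm⟩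
  · have hm2 : n = 2*m := by omega
    subst hm2
    rw [if_pos ⟨m, by omega⟩, ← pow_one (PowerSeries.X : ℚ⟦X⟧), PowerSeries.coeff_X_pow_mul']
    have e0 : 2*m/2 = m := by omega
    rw [e0]
    match m with
    | 0 => norm_num
    | (t+1) =>
        rw [if_pos (by omega : 1 ≤ t+1), if_pos (by omega : 2 ≤ 2*(t+1))]
        have e1 : 2*(t+1) - 2 = 2*t := by omega
        rw [e1, coeff_ev_even]
        have e2 : t+1-1 = t := by omega
        rw [e2]
  · have hm2 : n = 2*m+1 := by omega
    subst hm2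
    rw [if_neg (by rw [Nat.even_iff]; omega)]
    by_cases h2 : 2 ≤ 2*m+1
    · rw [if_pos h2]
      have e1 : 2*m+1-2 = 2*(m-1)+1 := by omega
      rw [e1, coeff_ev_odd]
    · rw [if_neg h2]

lemma hW : (ev (Tpow 3 2)) * (1 - PowerSeries.X^2 * (ev (Tpow 3 2)))^2 = 1 := by
  set V : ℚ⟦X⟧ := Tpow 3 2 with hVdef
  have e1 : ev (PowerSeries.X*(V*V)) = PowerSeries.X^2 * (ev V * ev V) := by
    rw [ev_X_mul, ev_mul]
  have e2 : ev (PowerSeries.X*(PowerSeries.X*(V*(V*V))))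
      = PowerSeries.X^2*(PowerSeries.X^2*(ev V*(ev V*ev V))) := by
    rw [ev_X_mul, ev_X_mul, ev_mul, ev_mul]
  have e4 : V - PowerSeries.X*(V*V) - PowerSeries.X*(V*V)
      + PowerSeries.X*(PowerSeries.X*(V*(V*V))) = 1 := by
    linear_combination hV
  calc ev V * (1 - PowerSeries.X^2 * ev V)^2
      = ev V - ev (PowerSeries.X*(V*V)) - ev (PowerSeries.X*(V*V))
        + ev (PowerSeries.X*(PowerSeries.X*(V*(V*V)))) := by rw [e1, e2]; ring
    _ = ev (V - PowerSeries.X*(V*V) - PowerSeries.X*(V*V)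
        + PowerSeries.X*(PowerSeries.X*(V*(V*V)))) := by rw [ev_add, ev_sub, ev_sub]
    _ = ev 1 := by rw [e4]
    _ = 1 := ev_one

/-- uniqueness of the solution of `P(1-X²P)² = 1` -/
lemma uniq {A B : ℚ⟦X⟧} (hA : A * (1 - PowerSeries.X^2*A)^2 = 1)
    (hB : B * (1 - PowerSeries.X^2*B)^2 = 1) : A = B := by
  have hfac : (A - B) * (1 - 2*PowerSeries.X^2*(A+B)
      + PowerSeries.X^4*(A^2 + A*B + B^2)) = 0 := by
    linear_combination hA - hB
  have hGne : (1 - 2*PowerSeries.X^2*(A+B) + PowerSeries.X^4*(A^2 + A*B + B^2)) ≠ 0 := by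
    intro h
    have := congrArg (PowerSeries.constantCoeff) h
    simp only [map_add, map_sub, map_one, map_mul, map_pow, PowerSeries.constantCoeff_X] at this
    norm_num at this
  rcases mul_eq_zero.mp hfac with h | h
  · exact sub_eq_zero.mp h
  · exact absurd h hGne

lemma final_eq : knuthT * knuthTneg = ev (Tpow 3 2) := uniq Pmain hW

lemma pr_nat (N : ℕ) : ∀ k : ℕ, k ≤ N → pr (N:ℚ) k = (N.factorial : ℚ)/((N-k).factorial : ℚ) := by
  intro k
  induction k with
  | zero =>
      intro _; rw [pr_zero]
      rw [Nat.sub_zero, eq_comm, div_eq_one_iff_eq (fact_ne N)]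
  | succ k ih =>
      intro hk
      have hk' : k ≤ N := by omega
      rw [pr_succ, ih hk']
      have e1 : ((N:ℚ) - (k:ℚ)) = ((N-k : ℕ) : ℚ) := by
        push_cast [hk']; ring
      have e2 : (N - k : ℕ) = (N - (k+1) : ℕ) + 1 := by omega
      have e3 : ((N-k:ℕ).factorial : ℚ) = (((N-(k+1):ℕ):ℚ)+1) * ((N-(k+1)).factorial : ℚ) := by
        rw [e2, Nat.factorial_succ]; push_cast; ring
      have e5 : ((N-k:ℕ):ℚ) = ((N-(k+1):ℕ):ℚ)+1 := by rw [e2]; push_cast; ring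
      rw [e1, e5, e3]
      have h1 : (((N-(k+1):ℕ):ℚ)+1) ≠ 0 := by positivity
      have h2 := fact_ne (N-(k+1))
      rw [div_mul_eq_mul_div, mul_comm ((((N-(k+1):ℕ):ℚ))+1) (((N-(k+1)).factorial:ℕ):ℚ)]
      rw [mul_div_mul_right _ _ h1]

lemma PP32 (n : ℕ) : PP 3 2 n = (((3*n+1).choose n : ℕ) : ℚ) / ((n:ℚ)+1) := by
  cases n with
  | zero => simp [PP_zero']
  | succ m =>
      rw [PP_prod]
      have e : (2:ℚ) + 3*((m+1:ℕ):ℚ) - 1 = ((3*m+4 : ℕ) : ℚ) := by push_cast; ring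
      rw [e]
      have hm : m ≤ 3*m+4 := by omega
      rw [pr_nat (3*m+4) m hm]
      have e1 : (3*m+4) - m = 2*m+4 := by omega
      rw [e1]
      have echoose : (((3*(m+1)+1).choose (m+1) : ℕ) : ℚ)
          = ((3*m+4).factorial : ℚ) / (((m+1).factorial : ℚ) * ((2*m+3).factorial : ℚ)) := by
        have h : (m+1) ≤ 3*(m+1)+1 := by omega
        have := Nat.cast_choose ℚ h
        rw [this]
        have e3 : 3*(m+1)+1 - (m+1) = 2*m+3 := by omega
        rw [e3]
        have e2 : 3*(m+1)+1 = 3*m+4 := by omega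
        rw [e2]
      rw [echoose]
      have e4 : ((2*m+4).factorial : ℚ) = ((2*(m:ℚ)+4)) * ((2*m+3).factorial : ℚ) := by
        rw [show 2*m+4 = (2*m+3)+1 from rfl, Nat.factorial_succ]
        push_cast; ring
      rw [e4]
      have h1 := fact_ne (3*m+4)
      have h2 := fact_ne (2*m+3)
      have h3 := fact_ne (m+1)
      have h4 : (2*(m:ℚ)+4) ≠ 0 := by positivity
      have h5 : ((m+1:ℕ):ℚ) + 1 ≠ 0 := by push_cast; positivity
      push_cast
      field_simp
      ring


/-- Knuth's identity
`T(z)·T(−z) = Σ_{n≥0} (1/(n+1))·C(3n+1,n)·z^{2n}`. -/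
theorem knuth_half_tree_identity :
    (∀ n : ℕ, PowerSeries.coeff (2 * n) (knuthT * knuthTneg) =
        ((3 * n + 1).choose n : ℚ) / (n + 1)) ∧
    (∀ n : ℕ, PowerSeries.coeff (2 * n + 1) (knuthT * knuthTneg) = 0) := by
  constructor
  · intro n
    rw [final_eq, coeff_ev_even, coeff_Tpow, PP32]
  · intro n
    rw [final_eq, coeff_ev_odd]
end

section
/- Let u_1(z), u_2(z) be the two small roots (Puiseux series vanishing at z=0) of the kernel equation 1 − z(u^{−2}+u^5) = 0, i.e., u^2 = z(1 + u^7). Then the generating function F_0(z) for walks with steps {−2,+5} on ℕ from altitude 3 to altitude 0 equals −u_1 u_2 (u_1^4 − u_2^4)/(z(u_1 − u_2)), and the generating function G_1(z) for such walks from altitude 4 to altitude 1 equals (u_1^6 − u_2^6)/(z(u_1 − u_2)). -/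
open PowerSeries

/-- `walkCount h n k` = number of walks of length `n` on `ℕ` with steps `−2, +5`,
starting at altitude `h`, staying nonnegative, and ending at altitude `k`. -/
noncomputable def walkCount (h : ℕ) (n : ℕ) (k : ℤ) : ℕ :=
  Nat.card {w : List ℤ //
    w.length = n ∧ (∀ s ∈ w, s = -2 ∨ s = 5) ∧
    (∀ m : ℕ, 0 ≤ (h : ℤ) + (w.take m).sum) ∧ (h : ℤ) + w.sum = k}

/-- A generating function `Σ_n c_n z^n`, rewritten as a power series in `x` where
`z = x²` (the small roots of the kernel are power series in `x = √z`). -/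
noncomputable def liftSqrt (c : ℕ → ℕ) : PowerSeries ℚ :=
  PowerSeries.mk fun m => if m % 2 = 0 then (c (m / 2) : ℚ) else 0

/-! ### Combinatorics -/

def WalkP (h : ℕ) (n : ℕ) (k : ℤ) (w : List ℤ) : Prop :=
  w.length = n ∧ (∀ s ∈ w, s = -2 ∨ s = 5) ∧
    (∀ m : ℕ, 0 ≤ (h : ℤ) + (w.take m).sum) ∧ (h : ℤ) + w.sum = k

lemma walkCount_eq (h n : ℕ) (k : ℤ) :
    walkCount h n k = Nat.card {w : List ℤ // WalkP h n k w} := rfl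

instance walkFinite (h n : ℕ) (k : ℤ) : Finite {w : List ℤ // WalkP h n k w} := by
  apply Finite.of_injective
    (f := fun w : {w : List ℤ // WalkP h n k w} => fun i : Fin n => decide (w.1.getD i 0 = 5))
  intro a b hab
  apply Subtype.ext
  apply List.ext_getElem (a.2.1.trans b.2.1.symm)
  intro i hia hib
  have h0 := congrFun hab ⟨i, a.2.1 ▸ hia⟩
  simp only [List.getD_eq_getElem a.1 0 hia, List.getD_eq_getElem b.1 0 hib,
    decide_eq_decide] at h0
  rcases a.2.2.1 _ (List.getElem_mem hia) with h1 | h1 <;>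
    rcases b.2.2.1 _ (List.getElem_mem hib) with h2 | h2
  · rw [h1, h2]
  · exact absurd (h1.symm.trans (h0.mpr h2)) (by norm_num)
  · exact absurd (h2.symm.trans (h0.mp h1)) (by norm_num)
  · rw [h1, h2]

lemma walkCount_zero (h : ℕ) (k : ℤ) :
    walkCount h 0 k = if k = (h : ℤ) then 1 else 0 := by
  rw [walkCount_eq]
  split
  · next hk =>
    rw [Nat.card_eq_one_iff_unique]
    constructor
    · constructor
      rintro ⟨wa, la, -⟩ ⟨wb, lb, -⟩
      apply Subtype.ext
      rw [List.length_eq_zero_iff] at la lb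
      show wa = wb
      rw [la, lb]
    · exact ⟨⟨[], rfl, by simp, fun m => by simpa using Int.natCast_nonneg h,
        by simp [hk]⟩⟩
  · next hk =>
    rw [Nat.card_eq_zero]
    left
    constructor
    rintro ⟨w, lw, -, -, he⟩
    rw [List.length_eq_zero_iff] at lw
    subst lw
    simp at he
    exact hk he.symm

lemma walkCount_neg (h n : ℕ) {k : ℤ} (hk : k < 0) : walkCount h n k = 0 := by
  rw [walkCount_eq, Nat.card_eq_zero]
  left
  constructor
  rintro ⟨w, -, -, hp, he⟩
  have := hp w.length
  rw [List.take_length] at this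
  omega

lemma WalkP.append {h n : ℕ} {k s : ℤ} (hk : 0 ≤ k) (hs : s = -2 ∨ s = 5)
    {w : List ℤ} (hw : WalkP h n (k - s) w) : WalkP h (n + 1) k (w ++ [s]) := by
  obtain ⟨hl, hsteps, hpre, hend⟩ := hw
  refine ⟨by simp [hl], ?_, ?_, by simp; omega⟩
  · intro t ht
    rcases List.mem_append.1 ht with h' | h'
    · exact hsteps t h'
    · simp at h'; subst h'; exact hs
  · intro m
    by_cases hm : m ≤ n
    · rw [List.take_append_of_le_length (by omega)]
      exact hpre m
    · rw [List.take_of_length_le (by simp [hl]; omega)]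
      simp only [List.sum_append, List.sum_cons, List.sum_nil]
      omega

lemma WalkP.dropLast {h n : ℕ} {k : ℤ} {w : List ℤ} (hne : w ≠ [])
    (hw : WalkP h (n + 1) k w) : WalkP h n (k - w.getLast hne) w.dropLast := by
  obtain ⟨hl, hsteps, hpre, hend⟩ := hw
  have hsum : w.dropLast.sum + w.getLast hne = w.sum := by
    conv_rhs => rw [← List.dropLast_concat_getLast hne]
    simp
  refine ⟨by simp [hl], ?_, ?_, by omega⟩
  · exact fun t ht => hsteps t ((List.dropLast_sublist w).subset ht)
  · intro m
    rw [List.dropLast_eq_take, List.take_take]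
    exact hpre _

lemma walkCount_succ (h n : ℕ) (k : ℤ) (hk : 0 ≤ k) :
    walkCount h (n + 1) k = walkCount h n (k + 2) + walkCount h n (k - 5) := by
  rw [walkCount_eq, walkCount_eq, walkCount_eq, ← Nat.card_sum]
  refine (Nat.card_congr (Equiv.ofBijective
    (Sum.elim
      (fun w : {w : List ℤ // WalkP h n (k + 2) w} =>
        (⟨w.1 ++ [-2], WalkP.append hk (Or.inl rfl)
          (by rw [show k - (-2) = k + 2 by ring]; exact w.2)⟩ :
          {w : List ℤ // WalkP h (n + 1) k w}))
      (fun w : {w : List ℤ // WalkP h n (k - 5) w} =>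
        (⟨w.1 ++ [5], WalkP.append hk (Or.inr rfl) w.2⟩ :
          {w : List ℤ // WalkP h (n + 1) k w})))
    ⟨?_, ?_⟩)).symm
  · rintro (⟨w1, p1⟩ | ⟨w1, p1⟩) (⟨w2, p2⟩ | ⟨w2, p2⟩) hw <;>
      simp only [Sum.elim_inl, Sum.elim_inr, Subtype.mk.injEq,
        ← List.concat_eq_append, List.concat_inj] at hw
    · exact congrArg Sum.inl (Subtype.ext hw.1)
    · exact absurd hw.2 (by norm_num)
    · exact absurd hw.2 (by norm_num)
    · exact congrArg Sum.inr (Subtype.ext hw.1)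
  · rintro ⟨w, hw⟩
    have hne : w ≠ [] := by
      intro hcon
      subst hcon
      simpa using hw.1
    have hdl := WalkP.dropLast hne hw
    rcases hw.2.1 _ (List.getLast_mem hne) with hs | hs
    · refine ⟨Sum.inl ⟨w.dropLast, ?_⟩, ?_⟩
      · rw [show k + 2 = k - (-2) by ring, ← hs]; exact hdl
      · simp only [Sum.elim_inl]
        exact Subtype.ext (show w.dropLast ++ [-2] = w from by
          rw [← hs]; exact List.dropLast_concat_getLast hne)
    · refine ⟨Sum.inr ⟨w.dropLast, ?_⟩, ?_⟩
      · rw [← hs]; exact hdl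
      · simp only [Sum.elim_inr]
        exact Subtype.ext (show w.dropLast ++ [5] = w from by
          rw [← hs]; exact List.dropLast_concat_getLast hne)

/-! ### Generating functions -/

noncomputable def Fgen (h : ℕ) (k : ℤ) : PowerSeries ℚ :=
  liftSqrt fun n => walkCount h n k

lemma coeff_Fgen (h : ℕ) (k : ℤ) (m : ℕ) :
    (coeff m) (Fgen h k) = if m % 2 = 0 then (walkCount h (m / 2) k : ℚ) else 0 := by
  simp [Fgen, liftSqrt, coeff_mk]

lemma Fgen_neg (h : ℕ) {k : ℤ} (hk : k < 0) : Fgen h k = 0 := by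
  ext m
  simp [coeff_Fgen, walkCount_neg h _ hk]

lemma Fgen_rec (h : ℕ) (k : ℤ) (hk : 0 ≤ k) :
    Fgen h k = (if k = (h : ℤ) then 1 else 0)
      + X ^ 2 * (Fgen h (k + 2) + Fgen h (k - 5)) := by
  ext m
  rw [map_add]
  have hifc : ∀ m' : ℕ, (coeff m') (if k = (h : ℤ) then (1 : PowerSeries ℚ) else 0)
      = if k = (h : ℤ) then (if m' = 0 then (1 : ℚ) else 0) else 0 := by
    intro m'
    rw [apply_ite (coeff m')]
    simp [coeff_one]
  match m with
  | 0 =>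
    have hz : (coeff 0) (X ^ 2 * (Fgen h (k + 2) + Fgen h (k - 5))) = 0 := by
      refine X_pow_dvd_iff.1 (dvd_mul_right _ _) 0 (by norm_num)
    rw [hz, hifc, coeff_Fgen, walkCount_zero]
    by_cases hkh : k = (h : ℤ) <;> simp [hkh]
  | 1 =>
    have hz : (coeff 1) (X ^ 2 * (Fgen h (k + 2) + Fgen h (k - 5))) = 0 := by
      refine X_pow_dvd_iff.1 (dvd_mul_right _ _) 1 (by norm_num)
    rw [hz, hifc]
    simp [coeff_Fgen]
  | m + 2 =>
    rw [coeff_X_pow_mul, hifc, map_add]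
    simp only [coeff_Fgen]
    have hm1 : (m + 2) % 2 = m % 2 := by omega
    have hm2 : (m + 2) / 2 = m / 2 + 1 := by omega
    rw [hm1, hm2]
    split
    · next hm =>
      rw [walkCount_succ h (m / 2) k hk]
      push_cast
      simp [ite_self]
    · simp

section Kernel

variable (h : ℕ) (u : PowerSeries ℚ)

noncomputable def Spart (M : ℕ) : PowerSeries ℚ :=
  ∑ k ∈ Finset.range (M + 1), Fgen h ((k : ℕ) : ℤ) * u ^ k

lemma Spart_succ (M : ℕ) :
    Spart h u (M + 1) = Spart h u M + Fgen h (((M + 1 : ℕ) : ℤ)) * u ^ (M + 1) := by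
  rw [Spart, Spart, Finset.sum_range_succ]

lemma Spart_zero : Spart h u 0 = Fgen h 0 := by
  simp [Spart]

lemma sum_delta (M : ℕ) (hM : h ≤ M) :
    ∑ k ∈ Finset.range (M + 1),
        (if ((k : ℕ) : ℤ) = (h : ℤ) then (1 : PowerSeries ℚ) else 0) * u ^ (k + 2)
      = u ^ (h + 2) := by
  simp only [Nat.cast_inj, ite_mul, one_mul, zero_mul]
  rw [Finset.sum_ite_eq' (Finset.range (M + 1)) h (fun k => u ^ (k + 2))]
  simp [Finset.mem_range, Nat.lt_succ_of_le hM]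

lemma sum_shift2 (M : ℕ) :
    ∑ k ∈ Finset.range (M + 1), Fgen h ((k : ℤ) + 2) * u ^ (k + 2)
      = Spart h u (M + 2) - Fgen h 0 - Fgen h 1 * u := by
  have hsplit : Spart h u (M + 2)
      = ∑ k ∈ Finset.range 2, Fgen h ((k : ℤ)) * u ^ k
        + ∑ k ∈ Finset.range (M + 1), Fgen h (((2 + k : ℕ) : ℤ)) * u ^ (2 + k) := by
    rw [Spart, show M + 2 + 1 = 2 + (M + 1) from by omega, Finset.sum_range_add]
  have h2 : ∑ k ∈ Finset.range 2, Fgen h ((k : ℤ)) * u ^ k = Fgen h 0 + Fgen h 1 * u := by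
    rw [show (2 : ℕ) = 1 + 1 from rfl, Finset.sum_range_succ, Finset.sum_range_one]
    push_cast
    ring
  rw [hsplit, h2]
  have : ∀ k ∈ Finset.range (M + 1),
      Fgen h (((2 + k : ℕ) : ℤ)) * u ^ (2 + k) = Fgen h ((k : ℤ) + 2) * u ^ (k + 2) := by
    intro k _
    rw [show ((2 + k : ℕ) : ℤ) = (k : ℤ) + 2 from by push_cast; ring,
      show 2 + k = k + 2 from by omega]
  rw [Finset.sum_congr rfl this]
  push_cast
  ring

lemma sum_shift5 (M : ℕ) :
    ∑ k ∈ Finset.range (M + 5 + 1), Fgen h ((k : ℤ) - 5) * u ^ (k + 2)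
      = u ^ 7 * Spart h u M := by
  rw [show M + 5 + 1 = 5 + (M + 1) from by omega, Finset.sum_range_add]
  have hz : ∑ k ∈ Finset.range 5, Fgen h ((k : ℤ) - 5) * u ^ (k + 2) = 0 := by
    apply Finset.sum_eq_zero
    intro k hk
    rw [Finset.mem_range] at hk
    rw [Fgen_neg h (by omega : ((k : ℤ) - 5) < 0), zero_mul]
  rw [hz, zero_add, Spart, Finset.mul_sum]
  apply Finset.sum_congr rfl
  intro k _
  rw [show ((5 + k : ℕ) : ℤ) - 5 = ((k : ℕ) : ℤ) from by push_cast; ring,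
    show 5 + k + 2 = k + 7 from by omega]
  ring

lemma key_eq (hu : u ^ 2 = X ^ 2 * (1 + u ^ 7)) (M : ℕ) (hM : h ≤ M + 5) :
    X ^ 2 * (Fgen h 0 + Fgen h 1 * u) - u ^ (h + 2)
      = X ^ 2 * (Spart h u (M + 7) - Spart h u (M + 5))
        + X ^ 2 * u ^ 7 * (Spart h u M - Spart h u (M + 5)) := by
  have e1 : u ^ 2 * Spart h u (M + 5)
      = u ^ (h + 2) + X ^ 2 * (Spart h u (M + 7) - Fgen h 0 - Fgen h 1 * u)
        + X ^ 2 * u ^ 7 * Spart h u M := by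
    have step1 : u ^ 2 * Spart h u (M + 5)
        = ∑ k ∈ Finset.range (M + 5 + 1), Fgen h ((k : ℤ)) * u ^ (k + 2) := by
      rw [Spart, Finset.mul_sum]
      exact Finset.sum_congr rfl fun k _ => by ring
    rw [step1]
    have step2 : ∀ k ∈ Finset.range (M + 5 + 1), Fgen h ((k : ℤ)) * u ^ (k + 2)
        = (if ((k : ℕ) : ℤ) = (h : ℤ) then (1 : PowerSeries ℚ) else 0) * u ^ (k + 2)
          + X ^ 2 * (Fgen h ((k : ℤ) + 2) * u ^ (k + 2))
          + X ^ 2 * (Fgen h ((k : ℤ) - 5) * u ^ (k + 2)) := by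
      intro k _
      rw [Fgen_rec h ((k : ℤ)) (Int.natCast_nonneg k)]
      ring
    rw [Finset.sum_congr rfl step2, Finset.sum_add_distrib, Finset.sum_add_distrib,
      ← Finset.mul_sum, ← Finset.mul_sum, sum_delta h u (M + 5) hM,
      sum_shift2 h u (M + 5), sum_shift5 h u M]
    ring
  have e3 : u ^ 2 * Spart h u (M + 5)
      = X ^ 2 * Spart h u (M + 5) + X ^ 2 * u ^ 7 * Spart h u (M + 5) := by
    rw [hu]; ring
  linear_combination e1 - e3

lemma kernel_subst (hu0 : constantCoeff u = 0) (hu : u ^ 2 = X ^ 2 * (1 + u ^ 7)) :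
    X ^ 2 * (Fgen h 0 + Fgen h 1 * u) = u ^ (h + 2) := by
  rw [← sub_eq_zero]
  ext m
  rw [map_zero]
  set M := m + h with hMdef
  have hXu : (X : PowerSeries ℚ) ∣ u := X_dvd_iff.2 hu0
  have hXpow : ∀ j : ℕ, m + 1 ≤ j → (X : PowerSeries ℚ) ^ (m + 1) ∣ u ^ j := by
    intro j hj
    exact (pow_dvd_pow_of_dvd hXu (m + 1)).trans (pow_dvd_pow u hj)
  rw [key_eq h u hu M (by omega)]
  refine X_pow_dvd_iff.1 ?_ m (Nat.lt_succ_self m)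
  apply dvd_add
  · have hd : Spart h u (M + 7) - Spart h u (M + 5)
        = Fgen h ((M + 6 : ℕ) : ℤ) * u ^ (M + 6) + Fgen h ((M + 7 : ℕ) : ℤ) * u ^ (M + 7) := by
      rw [show M + 7 = (M + 6) + 1 from rfl, Spart_succ, show M + 6 = (M + 5) + 1 from rfl,
        Spart_succ]
      ring
    rw [hd, mul_add]
    exact dvd_add (((hXpow (M + 6) (by omega)).mul_left _).mul_left _)
      (((hXpow (M + 7) (by omega)).mul_left _).mul_left _)
  · have hd : Spart h u M - Spart h u (M + 5)
        = -(Fgen h ((M + 1 : ℕ) : ℤ) * u ^ (M + 1) + Fgen h ((M + 2 : ℕ) : ℤ) * u ^ (M + 2)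
          + Fgen h ((M + 3 : ℕ) : ℤ) * u ^ (M + 3) + Fgen h ((M + 4 : ℕ) : ℤ) * u ^ (M + 4)
          + Fgen h ((M + 5 : ℕ) : ℤ) * u ^ (M + 5)) := by
      rw [show M + 5 = M + 4 + 1 from rfl, Spart_succ, show M + 4 = M + 3 + 1 from rfl,
        Spart_succ, show M + 3 = M + 2 + 1 from rfl, Spart_succ,
        show M + 2 = M + 1 + 1 from rfl, Spart_succ, show M + 1 = M + 1 from rfl, Spart_succ]
      ring
    rw [hd]
    apply Dvd.dvd.mul_left
    apply dvd_neg.2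
    repeat' apply dvd_add
    all_goals exact (hXpow _ (by omega)).mul_left _

end Kernel


/-- with `u₁, u₂` the two small roots of the kernel equation
`u² = z(1+u⁷)` (as power series in `x = √z`, vanishing at 0), the generating function
`F₀` of walks with steps `{−2,+5}` on `ℕ` from altitude 3 to altitude 0 satisfies
`F₀(z) = −u₁u₂(u₁⁴−u₂⁴)/(z(u₁−u₂))`, and the one `G₁` from altitude 4 to altitude 1
satisfies `G₁(z) = (u₁⁶−u₂⁶)/(z(u₁−u₂))` (stated with cleared denominators). -/
theorem small_roots_closed_form (u₁ u₂ : PowerSeries ℚ)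
    (h₁0 : PowerSeries.constantCoeff u₁ = 0) (h₂0 : PowerSeries.constantCoeff u₂ = 0)
    (h₁ : u₁ ^ 2 = PowerSeries.X ^ 2 * (1 + u₁ ^ 7))
    (h₂ : u₂ ^ 2 = PowerSeries.X ^ 2 * (1 + u₂ ^ 7))
    (hne : u₁ ≠ u₂) :
    PowerSeries.X ^ 2 * (u₁ - u₂) * liftSqrt (fun n => walkCount 3 n 0) =
        -(u₁ * u₂ * (u₁ ^ 4 - u₂ ^ 4)) ∧
    PowerSeries.X ^ 2 * (u₁ - u₂) * liftSqrt (fun n => walkCount 4 n 1) =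
        u₁ ^ 6 - u₂ ^ 6 := by
  have e31 := kernel_subst 3 u₁ h₁0 h₁
  have e32 := kernel_subst 3 u₂ h₂0 h₂
  have e41 := kernel_subst 4 u₁ h₁0 h₁
  have e42 := kernel_subst 4 u₂ h₂0 h₂
  constructor
  · show X ^ 2 * (u₁ - u₂) * Fgen 3 0 = -(u₁ * u₂ * (u₁ ^ 4 - u₂ ^ 4))
    linear_combination u₁ * e32 - u₂ * e31
  · show X ^ 2 * (u₁ - u₂) * Fgen 4 1 = u₁ ^ 6 - u₂ ^ 6
    linear_combination e41 - e42
end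

section
/- Rotation law for slope 2/5: let ω = e^{2πi/7} and let u_1(z), u_2(z) be the two small roots of u^2 = z(1+u^7), analytic on the slit disk |z| ≤ ρ, 0 < arg z < π − 2π/7 (ρ the positive dominant singularity). Then u_1(ωz) = ω^{−3} u_2(z) and u_2(ωz) = ω^{−3} u_1(z) on this domain. -/
open Complex Real
open Set

noncomputable def Complex.abs : AbsoluteValue ℂ ℝ where
  toFun z := ‖z‖
  map_mul' := norm_mul
  nonneg' := norm_nonneg
  eq_zero' _ := norm_eq_zero
  add_le' := norm_add_le

lemma Complex.abs_apply (z : ℂ) : Complex.abs z = ‖z‖ := rfl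

@[simp] lemma Complex.abs_exp (z : ℂ) : Complex.abs (Complex.exp z) = Real.exp z.re :=
  Complex.norm_exp z

@[simp] lemma Complex.abs_ofReal (r : ℝ) : Complex.abs (r : ℂ) = |r| := Complex.norm_real r

@[simp] lemma Complex.abs_two : Complex.abs (2 : ℂ) = 2 := by
  rw [Complex.abs_apply]; exact Complex.norm_two

lemma Complex.continuous_abs : Continuous Complex.abs := continuous_norm

lemma Complex.abs_mul_exp_arg_mul_I (x : ℂ) :
    ↑(Complex.abs x) * Complex.exp (↑(Complex.arg x) * Complex.I) = x :=
  Complex.norm_mul_exp_arg_mul_I x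

/-- The structural radius `ρ = (2²·5⁵)^{1/7}/7`. -/
noncomputable def structRho : ℝ := (2 ^ 2 * 5 ^ 5 : ℝ) ^ ((1 : ℝ) / 7) / 7

/-- `ω = e^{2πi/7}`. -/
noncomputable def omega7 : ℂ := Complex.exp (2 * Real.pi * Complex.I / 7)

/-- The slit disk of radius `ρ` on which the two small branches are defined:
`|z| ≤ ρ` minus the cut along the nonpositive real axis. -/
noncomputable def slitDisk : Set ℂ :=
  {z : ℂ | ‖z‖ ≤ structRho ∧ (z.im ≠ 0 ∨ 0 ≤ z.re)}

lemma structRho_pos : 0 < structRho := by unfold structRho; positivity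

lemma omega7_ne_zero : omega7 ≠ 0 := Complex.exp_ne_zero _

lemma omega7_pow_seven : omega7 ^ 7 = 1 := by
  unfold omega7
  rw [← Complex.exp_nat_mul]
  rw [show ((7:ℕ):ℂ) * (2 * (Real.pi:ℂ) * Complex.I / 7) = 2 * Real.pi * Complex.I by
    push_cast; ring]
  exact Complex.exp_two_pi_mul_I

lemma abs_omega7 : Complex.abs omega7 = 1 := by
  unfold omega7
  rw [Complex.abs_exp]
  norm_num [Complex.div_re]

lemma sum_identity (a b z : ℂ) (ha : a ^ 2 = z * (1 + a ^ 7)) (hb : b ^ 2 = z * (1 + b ^ 7)) :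
    (a - b) * ((a + b) - z * (a^6 + a^5*b + a^4*b^2 + a^3*b^3 + a^2*b^4 + a*b^5 + b^6)) = 0 := by
  linear_combination ha - hb

lemma rpow_sev (x : ℝ) (hx : 0 ≤ x) : (x ^ (7:ℕ)) ^ ((1:ℝ)/7) = x := by
  rw [← Real.rpow_natCast x 7, ← Real.rpow_mul hx]
  norm_num

/-- no critical point strictly inside the disk -/
lemma root_ne_of_small (z u : ℂ) (habs : Complex.abs z < structRho) (hz : z ≠ 0)
    (hu : u ^ 2 = z * (1 + u ^ 7)) : 2 * u - z * (7 * u ^ 6) ≠ 0 := by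
  intro h
  have hu0 : u ≠ 0 := by
    intro h0; apply hz; simpa [h0] using hu.symm
  have h2 : 2 * u ^ 2 = z * (7 * u ^ 7) := by linear_combination u * h
  have hz5 : z = 5/7 * u ^ 2 := by
    linear_combination (-1 : ℂ) * hu + (1/7 : ℂ) * h2
  have hu7 : u ^ 7 = 2/5 := by
    have hq : u ^ 2 * (5 * u ^ 7 - 2) = 0 := by
      rw [hz5] at hu
      linear_combination (-7:ℂ) * hu
    rcases mul_eq_zero.1 hq with h1 | h1
    · exact absurd (pow_eq_zero_iff (by norm_num)|>.1 h1) hu0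
    · linear_combination (5:ℂ)⁻¹ * h1
  have habs7 : (Complex.abs u) ^ (7:ℕ) = 2/5 := by
    rw [← map_pow, hu7]
    rw [show ((2:ℂ)/5) = ((2/5 : ℝ) : ℂ) by norm_num, Complex.abs_ofReal]
    norm_num
  have hz_abs : Complex.abs z = 5/7 * (Complex.abs u) ^ 2 := by
    rw [hz5, map_mul, map_pow]
    rw [show ((5:ℂ)/7) = ((5/7 : ℝ) : ℂ) by norm_num, Complex.abs_ofReal]
    norm_num
  set s : ℝ := Complex.abs u with hs
  have hs14 : s ^ (14:ℕ) = 4/25 := by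
    have : s ^ (14:ℕ) = (s ^ (7:ℕ)) ^ (2:ℕ) := by ring
    rw [this, habs7]; norm_num
  have e1 : (7 * Complex.abs z) ^ (7:ℕ) = 12500 := by
    rw [hz_abs]
    have : (7 * (5/7 * s ^ 2)) ^ (7:ℕ) = 5^(7:ℕ) * s ^ (14:ℕ) := by ring
    rw [this, hs14]; norm_num
  have e2 : 7 * Complex.abs z = (12500:ℝ) ^ ((1:ℝ)/7) := by
    rw [← e1, rpow_sev _ (by positivity)]
  have e3 : structRho = (12500:ℝ) ^ ((1:ℝ)/7) / 7 := by
    unfold structRho; norm_num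
  rw [e3] at habs
  linarith [habs, e2]

/-- the open punctured sector -/
def sector : Set ℂ :=
  {z : ℂ | 0 < z.im ∧ Complex.abs z < structRho ∧ Complex.arg z < Real.pi - 2 * Real.pi / 7}

lemma sector_subset_slitDisk : sector ⊆ slitDisk := by
  rintro z ⟨h1, h2, _⟩
  exact ⟨h2.le, Or.inl (ne_of_gt h1)⟩

lemma sector_arg_pos {z : ℂ} (hz : z ∈ sector) : 0 < Complex.arg z := by
  rcases hz with ⟨h1, _, _⟩
  rcases lt_or_eq_of_le (Complex.arg_nonneg_iff.2 h1.le) with h | h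
  · exact h
  · exfalso
    have := (Complex.arg_eq_zero_iff.1 h.symm).2
    linarith
lemma sector_ne_zero {z : ℂ} (hz : z ∈ sector) : z ≠ 0 := by
  intro h; rcases hz with ⟨h1, _, _⟩; rw [h] at h1; simp at h1

lemma sector_isOpen : IsOpen sector := by
  rw [isOpen_iff_mem_nhds]
  rintro z ⟨h1, h2, h3⟩
  have harg : ContinuousAt Complex.arg z := Complex.continuousAt_arg (Or.inr (ne_of_gt h1))
  have e1 : ∀ᶠ w in nhds z, 0 < w.im :=
    (Complex.continuous_im.continuousAt (x := z)).eventually_const_lt h1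
  have e2 : ∀ᶠ w in nhds z, Complex.abs w < structRho :=
    (Complex.continuous_abs.continuousAt (x := z)).eventually_lt_const h2
  have e3 : ∀ᶠ w in nhds z, Complex.arg w < Real.pi - 2 * Real.pi / 7 :=
    harg.eventually_lt_const h3
  filter_upwards [e1, e2, e3] with w w1 w2 w3
  exact ⟨w1, w2, w3⟩

lemma sector_eq_image : sector =
    (fun p : ℝ × ℝ => (p.1 : ℂ) * Complex.exp (p.2 * Complex.I)) ''
      (Ioo (0:ℝ) structRho ×ˢ Ioo (0:ℝ) (Real.pi - 2 * Real.pi / 7)) := by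
  ext z
  constructor
  · rintro hz
    refine ⟨⟨Complex.abs z, Complex.arg z⟩, ⟨⟨?_, hz.2.1⟩, ⟨sector_arg_pos hz, hz.2.2⟩⟩, ?_⟩
    · exact AbsoluteValue.pos _ (sector_ne_zero hz)
    · exact Complex.abs_mul_exp_arg_mul_I z
  · rintro ⟨⟨r, θ⟩, ⟨⟨hr0, hrρ⟩, ⟨hθ0, hθ1⟩⟩, rfl⟩
    have hθπ : θ < Real.pi := by
      have := Real.pi_pos; linarith
    have hsin : 0 < Real.sin θ := Real.sin_pos_of_pos_of_lt_pi hθ0 hθπ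
    have him : ((r:ℂ) * Complex.exp (θ * Complex.I)).im = r * Real.sin θ := by
      rw [Complex.mul_im]
      simp [Complex.exp_ofReal_mul_I_im]
    have habs : Complex.abs ((r:ℂ) * Complex.exp (θ * Complex.I)) = r := by
      rw [map_mul, Complex.abs_exp]
      simp [abs_of_pos hr0]
    have harg : Complex.arg ((r:ℂ) * Complex.exp (θ * Complex.I)) = θ := by
      rw [Complex.exp_mul_I, Complex.arg_real_mul _ hr0]
      exact Complex.arg_cos_add_sin_mul_I ⟨by linarith [Real.pi_pos], le_of_lt hθπ⟩
    refine ⟨by rw [him]; positivity, by rw [habs]; exact hrρ, by rw [harg]; exact hθ1⟩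

lemma sector_isPreconnected : IsPreconnected sector := by
  rw [sector_eq_image]
  apply IsPreconnected.image
  · exact (isPreconnected_Ioo).prod isPreconnected_Ioo
  · apply Continuous.continuousOn
    exact (Complex.continuous_ofReal.comp continuous_fst).mul
      ((Complex.continuous_ofReal.comp continuous_snd).mul continuous_const).cexp

lemma polar_abs (r θ : ℝ) (hr : 0 ≤ r) :
    Complex.abs ((r:ℂ) * Complex.exp (θ * Complex.I)) = r := by
  rw [map_mul, Complex.abs_exp, Complex.abs_ofReal, _root_.abs_of_nonneg hr]
  simp

lemma polar_im (r θ : ℝ) :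
    ((r:ℂ) * Complex.exp (θ * Complex.I)).im = r * Real.sin θ := by
  rw [Complex.mul_im]
  simp [Complex.exp_ofReal_mul_I_im]

lemma polar_re (r θ : ℝ) :
    ((r:ℂ) * Complex.exp (θ * Complex.I)).re = r * Real.cos θ := by
  rw [Complex.mul_re]
  simp [Complex.exp_ofReal_mul_I_re, Complex.exp_ofReal_mul_I_im]

lemma polar_arg (r θ : ℝ) (hr : 0 < r) (hθ0 : -Real.pi < θ) (hθπ : θ ≤ Real.pi) :
    Complex.arg ((r:ℂ) * Complex.exp (θ * Complex.I)) = θ := by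
  rw [Complex.exp_mul_I, Complex.arg_real_mul _ hr]
  exact Complex.arg_cos_add_sin_mul_I ⟨hθ0, hθπ⟩

lemma omega7_shift (r θ : ℝ) :
    omega7 * ((r:ℂ) * Complex.exp (θ * Complex.I))
      = (r:ℂ) * Complex.exp (((2 * Real.pi / 7 + θ : ℝ) : ℂ) * Complex.I) := by
  unfold omega7
  rw [show Complex.exp (2 * (Real.pi:ℂ) * Complex.I / 7) * ((r:ℂ) * Complex.exp (θ * Complex.I))
    = (r:ℂ) * (Complex.exp (θ * Complex.I) * Complex.exp (2 * (Real.pi:ℂ) * Complex.I / 7)) by ring]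
  rw [← Complex.exp_add]
  congr 1
  push_cast
  ring

/-- membership facts for a point in the closed goal region -/
lemma region_mem (z : ℂ) (habs : Complex.abs z ≤ structRho)
    (h0 : 0 < Complex.arg z) (h1 : Complex.arg z < Real.pi - 2 * Real.pi / 7) :
    0 < z.im ∧ z ∈ slitDisk ∧ omega7 * z ∈ slitDisk ∧ z ≠ 0 := by
  have hpi := Real.pi_pos
  have hz0 : z ≠ 0 := by
    intro h; rw [h] at h0; simp [Complex.arg_zero] at h0
  have hr : 0 < Complex.abs z := AbsoluteValue.pos _ hz0
  have hrep := Complex.abs_mul_exp_arg_mul_I z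
  set r := Complex.abs z
  set θ := Complex.arg z with hθdef
  have hθπ : θ < Real.pi := by linarith
  have him : 0 < z.im := by
    rw [← hrep, polar_im]
    exact mul_pos hr (Real.sin_pos_of_pos_of_lt_pi h0 hθπ)
  have homega : omega7 * z = (r:ℂ) * Complex.exp (((2 * Real.pi / 7 + θ : ℝ) : ℂ) * Complex.I) := by
    rw [← hrep, omega7_shift]
  have him2 : 0 < (omega7 * z).im := by
    rw [homega, polar_im]
    exact mul_pos hr (Real.sin_pos_of_pos_of_lt_pi (by linarith) (by linarith))
  have habs2 : Complex.abs (omega7 * z) = r := by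
    rw [map_mul, abs_omega7, one_mul]
  exact ⟨him, ⟨habs, Or.inl (ne_of_gt him)⟩, ⟨by rw [← Complex.abs_apply, habs2]; exact habs, Or.inl (ne_of_gt him2)⟩, hz0⟩

lemma sector_region (z : ℂ) (hz : z ∈ sector) :
    Complex.abs z ≤ structRho ∧ 0 < Complex.arg z ∧ Complex.arg z < Real.pi - 2 * Real.pi / 7 :=
  ⟨hz.2.1.le, sector_arg_pos hz, hz.2.2⟩
section Arc
variable (u : ℂ → ℂ)

/-- tracking the branch along an arc of radius ε: the branch stays close to `√ε e^{iθ/2}`. -/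
lemma arc_lemma (hc : ContinuousOn u slitDisk)
    (hk : ∀ z ∈ slitDisk, (u z) ^ 2 = z * (1 + (u z) ^ 7))
    (ε : ℝ) (hε0 : 0 < ε) (hερ : ε < structRho)
    (hsmall : ∀ z ∈ slitDisk, Complex.abs z ≤ ε → Complex.abs (u z) ≤ 1/2)
    (hstart_im : (u (ε:ℂ)).im = 0) (hstart_re : 0 < (u (ε:ℂ)).re)
    (Θ : ℝ) (hΘ0 : 0 ≤ Θ) (hΘπ : Θ < Real.pi) :
    Complex.abs (u ((ε:ℂ) * Complex.exp ((Θ:ℝ) * Complex.I))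
      - (Real.sqrt ε : ℂ) * Complex.exp (((Θ/2 : ℝ):ℂ) * Complex.I)) ≤ (1/128) * Real.sqrt ε := by
  have hsq : (0:ℝ) < Real.sqrt ε := Real.sqrt_pos.2 hε0
  set p : ℝ → ℂ := fun θ => (ε:ℂ) * Complex.exp ((θ:ℝ) * Complex.I) with hp
  set q : ℝ → ℂ := fun θ => (Real.sqrt ε : ℂ) * Complex.exp (((θ/2 : ℝ):ℂ) * Complex.I) with hq
  have hpmem : ∀ θ ∈ Set.Icc 0 Θ, p θ ∈ slitDisk := by
    rintro θ ⟨h1, h2⟩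
    constructor
    · rw [← Complex.abs_apply, polar_abs _ _ hε0.le]; exact hερ.le
    · rcases eq_or_lt_of_le h1 with h | h
      · right; rw [← h]; simp [hp, polar_re, hε0.le]
      · left
        rw [hp]
        simp only []
        rw [polar_im]
        exact ne_of_gt (mul_pos hε0 (Real.sin_pos_of_pos_of_lt_pi h (lt_of_le_of_lt h2 hΘπ)))
  have hq0 : ∀ θ : ℝ, q θ ≠ 0 := fun θ =>
    mul_ne_zero (by exact_mod_cast ne_of_gt hsq) (Complex.exp_ne_zero _)
  have hq2 : ∀ θ : ℝ, (q θ) ^ 2 = p θ := by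
    intro θ
    rw [hq, hp]
    simp only []
    rw [mul_pow, ← Complex.exp_nat_mul]
    congr 1
    · rw [show ((Real.sqrt ε : ℂ)) ^ 2 = ((Real.sqrt ε ^ 2 : ℝ) : ℂ) by push_cast; ring]
      rw [Real.sq_sqrt hε0.le]
    · congr 1; push_cast; ring
  set f : ℝ → ℂ := fun θ => u (p θ) / q θ with hf
  have hqabs : ∀ θ : ℝ, Complex.abs (q θ) = Real.sqrt ε := by
    intro θ; rw [hq]; simp only []; exact polar_abs _ _ hsq.le
  have hf2 : ∀ θ ∈ Set.Icc 0 Θ, (f θ) ^ 2 - 1 = (u (p θ)) ^ 7 := by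
    intro θ hθ
    have hk' := hk (p θ) (hpmem θ hθ)
    have hp0 : p θ ≠ 0 :=
      mul_ne_zero (by exact_mod_cast hε0.ne') (Complex.exp_ne_zero _)
    rw [hf]
    simp only []
    rw [div_pow, hq2 θ, hk']
    field_simp
    ring
  have hubd : ∀ θ ∈ Set.Icc 0 Θ, Complex.abs (u (p θ)) ≤ 1/2 := by
    intro θ hθ
    apply hsmall _ (hpmem θ hθ)
    rw [hp]; simp only []; rw [polar_abs _ _ hε0.le]
  have hη : ∀ θ ∈ Set.Icc 0 Θ, Complex.abs ((f θ) ^ 2 - 1) ≤ 1/128 := by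
    intro θ hθ
    rw [hf2 θ hθ, map_pow]
    calc Complex.abs (u (p θ)) ^ 7 ≤ (1/2 : ℝ) ^ 7 := by
          apply pow_le_pow_left₀ (AbsoluteValue.nonneg _ _) (hubd θ hθ)
      _ = 1/128 := by norm_num
  -- continuity
  have hpc : Continuous p := by
    apply continuous_const.mul
    exact (Complex.continuous_ofReal.mul continuous_const).cexp
  have hfc : ContinuousOn f (Set.Icc 0 Θ) := by
    apply ContinuousOn.div
    · exact hc.comp hpc.continuousOn hpmem
    · apply Continuous.continuousOn
      apply continuous_const.mul
      exact ((Complex.continuous_ofReal.comp (continuous_id.div_const 2)).mul continuous_const).cexp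
    · intro θ _; exact hq0 θ
  set h : ℝ → ℝ := fun θ => Complex.abs (f θ - 1) with hh
  have hhc : ContinuousOn h (Set.Icc 0 Θ) :=
    Complex.continuous_abs.comp_continuousOn (hfc.sub continuousOn_const)
  -- key: small once ≤ 1/2
  have hkey : ∀ θ ∈ Set.Icc 0 Θ, h θ ≤ 1/2 → h θ ≤ 1/128 := by
    intro θ hθ hhalf
    simp only [hh] at hhalf
    have h1 : Complex.abs (f θ + 1) ≥ 3/2 := by
      have hA := Complex.abs.add_le (f θ + 1) (1 - f θ)
      rw [show (f θ + 1) + (1 - f θ) = 2 by ring, Complex.abs.map_sub] at hA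
      have h2 : Complex.abs (2:ℂ) = 2 := by norm_num
      rw [h2] at hA
      linarith
    have h2 : h θ * Complex.abs (f θ + 1) = Complex.abs ((f θ) ^ 2 - 1) := by
      rw [hh]
      simp only []
      rw [← map_mul]
      congr 1
      ring
    have h3 := hη θ hθ
    nlinarith [AbsoluteValue.nonneg Complex.abs (f θ - 1)]
  -- start value
  have hstart : h 0 ≤ 1/128 := by
    have hp0 : p 0 = (ε:ℂ) := by rw [hp]; simp
    have hq0' : q 0 = (Real.sqrt ε : ℂ) := by rw [hq]; simp
    have hureal : u (ε:ℂ) = ((u (ε:ℂ)).re : ℂ) := by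
      apply Complex.ext <;> simp [hstart_im]
    set t : ℝ := (u (ε:ℂ)).re / Real.sqrt ε with ht
    have hf0 : f 0 = (t:ℂ) := by
      rw [hf]; simp only []; rw [hp0, hq0', hureal, ht]; push_cast; ring
    have ht0 : 0 < t := div_pos hstart_re hsq
    have ht2 : |t ^ 2 - 1| ≤ 1/128 := by
      have := hη 0 ⟨le_refl 0, hΘ0⟩
      rw [hf2 0 ⟨le_refl 0, hΘ0⟩] at this
      have : Complex.abs ((f 0) ^ 2 - 1) ≤ 1/128 := hη 0 ⟨le_refl 0, hΘ0⟩
      rw [hf0] at this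
      rw [show ((t:ℂ)) ^ 2 - 1 = ((t ^ 2 - 1 : ℝ) : ℂ) by push_cast; ring] at this
      rwa [Complex.abs_ofReal] at this
    have habs : |t - 1| ≤ 1/128 := by
      have hfac : |t - 1| * (t + 1) = |t ^ 2 - 1| := by
        rw [← abs_of_pos (show (0:ℝ) < t + 1 by linarith), ← abs_mul]
        congr 1; ring
      nlinarith [abs_nonneg (t - 1)]
    rw [hh]
    simp only []
    rw [hf0, show ((t:ℂ)) - 1 = ((t - 1 : ℝ) : ℂ) by push_cast; ring, Complex.abs_ofReal]
    exact habs
  -- IVT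
  have hfinal : h Θ ≤ 1/128 := by
    by_contra hcon
    push_neg at hcon
    have hgt : 1/2 < h Θ := by
      by_contra hle
      push_neg at hle
      exact absurd (hkey Θ ⟨hΘ0, le_refl Θ⟩ hle) (not_le.2 hcon)
    have hmem : (1/2 : ℝ) ∈ Set.Icc (h 0) (h Θ) := ⟨by linarith, hgt.le⟩
    obtain ⟨θ, hθmem, hθeq⟩ := intermediate_value_Icc hΘ0 hhc hmem
    have := hkey θ hθmem (le_of_eq hθeq)
    rw [hθeq] at this
    linarith
  -- unfold
  have hdiff : u (p Θ) - q Θ = (f Θ - 1) * q Θ := by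
    rw [hf]
    simp only []
    rw [sub_mul, div_mul_cancel₀ _ (hq0 Θ), one_mul]
  calc Complex.abs (u (p Θ) - q Θ) = h Θ * Real.sqrt ε := by
        rw [hdiff, map_mul, hqabs]
    _ ≤ (1/128) * Real.sqrt ε := by
        apply mul_le_mul_of_nonneg_right hfinal hsq.le

end Arc

/-- two continuous root branches on the sector that agree somewhere agree everywhere -/
lemma branches_eq (F G : ℂ → ℂ) (hF : ContinuousOn F sector) (hG : ContinuousOn G sector)
    (hkF : ∀ z ∈ sector, (F z) ^ 2 = z * (1 + (F z) ^ 7))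
    (hkG : ∀ z ∈ sector, (G z) ^ 2 = z * (1 + (G z) ^ 7))
    (z₀ : ℂ) (hz₀ : z₀ ∈ sector) (hseed : F z₀ = G z₀) :
    ∀ z ∈ sector, F z = G z := by
  set φ : ℂ → ℂ := fun z => (F z + G z) - z * ((F z)^6 + (F z)^5*(G z) + (F z)^4*(G z)^2
    + (F z)^3*(G z)^3 + (F z)^2*(G z)^4 + (F z)*(G z)^5 + (G z)^6) with hφdef
  have hUopen : IsOpen {z | z ∈ sector ∧ F z = G z} := by
    rw [isOpen_iff_mem_nhds]
    rintro z₁ ⟨hz₁, heq⟩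
    have hFat : ContinuousAt F z₁ := hF.continuousAt (sector_isOpen.mem_nhds hz₁)
    have hGat : ContinuousAt G z₁ := hG.continuousAt (sector_isOpen.mem_nhds hz₁)
    have hcrit : 2 * (F z₁) - z₁ * (7 * (F z₁) ^ 6) ≠ 0 :=
      root_ne_of_small z₁ (F z₁) hz₁.2.1 (sector_ne_zero hz₁) (hkF z₁ hz₁)
    have hφat : ContinuousAt φ z₁ := by
      apply ContinuousAt.sub (hFat.add hGat)
      exact continuousAt_id.mul
        ((((((hFat.pow 6).add ((hFat.pow 5).mul hGat)).add ((hFat.pow 4).mul (hGat.pow 2))).add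
          ((hFat.pow 3).mul (hGat.pow 3))).add ((hFat.pow 2).mul (hGat.pow 4))).add
          (hFat.mul (hGat.pow 5))|>.add (hGat.pow 6))
    have hval : φ z₁ = 2 * (F z₁) - z₁ * (7 * (F z₁) ^ 6) := by
      rw [hφdef]
      simp only []
      rw [← heq]
      ring
    have hne' : ∀ᶠ w in nhds z₁, φ w ≠ 0 := hφat.eventually_ne (by rw [hval]; exact hcrit)
    have hsec : sector ∈ nhds z₁ := sector_isOpen.mem_nhds hz₁
    filter_upwards [hne', hsec] with w hwφ hw
    refine ⟨hw, ?_⟩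
    have hid := sum_identity (F w) (G w) w (hkF w hw) (hkG w hw)
    rcases mul_eq_zero.1 hid with h | h
    · exact sub_eq_zero.1 h
    · exact absurd h hwφ
  have hVopen : IsOpen {z | z ∈ sector ∧ F z ≠ G z} := by
    rw [isOpen_iff_mem_nhds]
    rintro z₁ ⟨hz₁, hne⟩
    have hFat : ContinuousAt F z₁ := hF.continuousAt (sector_isOpen.mem_nhds hz₁)
    have hGat : ContinuousAt G z₁ := hG.continuousAt (sector_isOpen.mem_nhds hz₁)
    have : ∀ᶠ w in nhds z₁, F w - G w ≠ 0 :=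
      (hFat.sub hGat).eventually_ne (sub_ne_zero.2 hne)
    have hsec : sector ∈ nhds z₁ := sector_isOpen.mem_nhds hz₁
    filter_upwards [this, hsec] with w hw1 hw2
    exact ⟨hw2, fun hcon => hw1 (sub_eq_zero.2 hcon)⟩
  intro z hz
  by_contra hcon
  obtain ⟨w, hwsec, hw1, hw2⟩ :=
    sector_isPreconnected _ _ hUopen hVopen
      (fun y hy => by
        by_cases h : F y = G y
        · exact Or.inl ⟨hy, h⟩
        · exact Or.inr ⟨hy, h⟩)
      ⟨z₀, hz₀, hz₀, hseed⟩ ⟨z, hz, hz, hcon⟩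
  exact hw2.2 hw1.2

lemma small_at_zero (u : ℂ → ℂ) (hc : ContinuousOn u slitDisk) (h0 : u 0 = 0) :
    ∃ ε > 0, ∀ z ∈ slitDisk, Complex.abs z ≤ ε → Complex.abs (u z) ≤ 1/2 := by
  have h00 : (0:ℂ) ∈ slitDisk := ⟨by simp [structRho_pos.le], Or.inr (le_refl 0)⟩
  have hcw := hc 0 h00
  rw [ContinuousWithinAt, h0, Metric.tendsto_nhdsWithin_nhds] at hcw
  obtain ⟨δ, hδ0, hδ⟩ := hcw (1/2) (by norm_num)
  refine ⟨δ/2, by positivity, fun z hz hzle => ?_⟩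
  have h1 : dist z 0 < δ := by
    rw [Complex.dist_eq, sub_zero, ← Complex.abs_apply]; linarith
  have := hδ hz h1
  rw [Complex.dist_eq, sub_zero] at this
  exact this.le

lemma term_bound (x y : ℂ) (hx : Complex.abs x ≤ 1/2) (hy : Complex.abs y ≤ 1/2)
    (i j : ℕ) : Complex.abs (x^i * y^j) ≤ 1 := by
  rw [map_mul, map_pow, map_pow]
  have h1 : Complex.abs x ^ i ≤ 1 := pow_le_one₀ (AbsoluteValue.nonneg _ _) (by linarith)
  have h2 : Complex.abs y ^ j ≤ 1 := pow_le_one₀ (AbsoluteValue.nonneg _ _) (by linarith)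
  calc Complex.abs x ^ i * Complex.abs y ^ j ≤ 1*1 :=
        mul_le_mul h1 h2 (by positivity) (by norm_num)
    _ = 1 := by norm_num

lemma S_bound (a b : ℂ) (ha : Complex.abs a ≤ 1/2) (hb : Complex.abs b ≤ 1/2) :
    Complex.abs (a^6 + a^5*b + a^4*b^2 + a^3*b^3 + a^2*b^4 + a*b^5 + b^6) ≤ 7 := by
  have t0 : Complex.abs (a^6) ≤ 1 := by simpa using term_bound a b ha hb 6 0
  have t1 : Complex.abs (a^5*b) ≤ 1 := by simpa using term_bound a b ha hb 5 1
  have t2 : Complex.abs (a^4*b^2) ≤ 1 := term_bound a b ha hb 4 2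
  have t3 : Complex.abs (a^3*b^3) ≤ 1 := term_bound a b ha hb 3 3
  have t4 : Complex.abs (a^2*b^4) ≤ 1 := term_bound a b ha hb 2 4
  have t5 : Complex.abs (a*b^5) ≤ 1 := by simpa using term_bound a b ha hb 1 5
  have t6 : Complex.abs (b^6) ≤ 1 := by simpa using term_bound a b ha hb 0 6
  have c1 := Complex.abs.add_le (a^6 + a^5*b + a^4*b^2 + a^3*b^3 + a^2*b^4 + a*b^5) (b^6)
  have c2 := Complex.abs.add_le (a^6 + a^5*b + a^4*b^2 + a^3*b^3 + a^2*b^4) (a*b^5)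
  have c3 := Complex.abs.add_le (a^6 + a^5*b + a^4*b^2 + a^3*b^3) (a^2*b^4)
  have c4 := Complex.abs.add_le (a^6 + a^5*b + a^4*b^2) (a^3*b^3)
  have c5 := Complex.abs.add_le (a^6 + a^5*b) (a^4*b^2)
  have c6 := Complex.abs.add_le (a^6) (a^5*b)
  linarith

/-- the rotated branch is again a root -/
lemma rotated_root (u : ℂ → ℂ) (z : ℂ) (hz : omega7 * z ∈ slitDisk)
    (hk : ∀ w ∈ slitDisk, (u w) ^ 2 = w * (1 + (u w) ^ 7)) :
    (omega7^3 * u (omega7*z)) ^ 2 = z * (1 + (omega7^3 * u (omega7*z)) ^ 7) := by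
  have hU := hk _ hz
  have h7 := omega7_pow_seven
  linear_combination omega7^6 * hU + (z - z*(u (omega7*z))^7*omega7^7*(omega7^7+1)) * h7

/-- two roots close to the same point `m` of size `√ε` must coincide -/
lemma near_point_unique (z₀ m a b : ℂ) (ε : ℝ) (hε0 : 0 < ε) (hε200 : ε ≤ 1/200)
    (habsz : Complex.abs z₀ = ε) (habsm : Complex.abs m = Real.sqrt ε)
    (ha : Complex.abs (a - m) ≤ (1/128)*Real.sqrt ε + 7*ε)
    (hb : Complex.abs (b - m) ≤ (1/128)*Real.sqrt ε + 7*ε)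
    (haa : Complex.abs a ≤ 1/2) (hbb : Complex.abs b ≤ 1/2)
    (hra : a ^ 2 = z₀*(1+a^7)) (hrb : b ^ 2 = z₀*(1+b^7)) : a = b := by
  by_contra hab
  have hid := sum_identity a b z₀ hra hrb
  have hsum : a + b = z₀ * (a^6+a^5*b+a^4*b^2+a^3*b^3+a^2*b^4+a*b^5+b^6) := by
    rcases mul_eq_zero.1 hid with h | h
    · exact absurd (sub_eq_zero.1 h) hab
    · exact sub_eq_zero.1 h
  have habsum : Complex.abs (a+b) ≤ 7*ε := by
    rw [hsum, map_mul, habsz]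
    calc ε * Complex.abs (a^6+a^5*b+a^4*b^2+a^3*b^3+a^2*b^4+a*b^5+b^6) ≤ ε * 7 :=
          mul_le_mul_of_nonneg_left (S_bound a b haa hbb) hε0.le
      _ = 7*ε := by ring
  have hneg : ∀ x y : ℂ, Complex.abs (-(x-y)) = Complex.abs (x-y) := fun x y => by
    rw [show -(x-y) = y-x by ring, Complex.abs.map_sub]
  have h2m : Complex.abs (2*m) ≤ Complex.abs (a+b) + Complex.abs (a-m) + Complex.abs (b-m) := by
    have e : (2:ℂ)*m = ((a+b) + (-(a-m))) + (-(b-m)) := by ring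
    calc Complex.abs (2*m) = Complex.abs (((a+b) + (-(a-m))) + (-(b-m))) := by rw [← e]
      _ ≤ Complex.abs ((a+b) + (-(a-m))) + Complex.abs (-(b-m)) := Complex.abs.add_le _ _
      _ ≤ (Complex.abs (a+b) + Complex.abs (-(a-m))) + Complex.abs (-(b-m)) := by
          linarith [Complex.abs.add_le (a+b) (-(a-m))]
      _ = Complex.abs (a+b) + Complex.abs (a-m) + Complex.abs (b-m) := by
          rw [hneg, hneg]
  have habs2m : Complex.abs (2*m) = 2*Real.sqrt ε := by
    rw [map_mul, habsm]
    norm_num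
  set s := Real.sqrt ε with hsdef
  have hs2 : s^2 = ε := Real.sq_sqrt hε0.le
  have hsp : 0 < s := Real.sqrt_pos.2 hε0
  rw [habs2m] at h2m
  nlinarith [h2m, habsum, ha, hb, hs2, hsp, hε200, mul_pos hsp hsp]

/-- rotation law for slope 2/5.  Let `u₁, u₂` be the two small roots of
`u² = z(1+u⁷)`: continuous root selections on the slit disk, vanishing at `0`,
distinct away from `0`, with `u₁` the branch positive on the positive real axis.
Then for `|z| ≤ ρ` and `0 < arg z < π − 2π/7` one has
`u₁(ωz) = ω⁻³·u₂(z)` and `u₂(ωz) = ω⁻³·u₁(z)`. -/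
theorem rotation_law_small_branches (u₁ u₂ : ℂ → ℂ)
    (hc₁ : ContinuousOn u₁ slitDisk) (hc₂ : ContinuousOn u₂ slitDisk)
    (hk₁ : ∀ z ∈ slitDisk, (u₁ z) ^ 2 = z * (1 + (u₁ z) ^ 7))
    (hk₂ : ∀ z ∈ slitDisk, (u₂ z) ^ 2 = z * (1 + (u₂ z) ^ 7))
    (h0₁ : u₁ 0 = 0) (h0₂ : u₂ 0 = 0)
    (hne : ∀ z ∈ slitDisk, z ≠ 0 → u₁ z ≠ u₂ z)
    (hpos : ∀ x : ℝ, 0 < x → x < structRho → (u₁ (x : ℂ)).im = 0 ∧ 0 < (u₁ (x : ℂ)).re) :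
    ∀ z : ℂ, ‖z‖ ≤ structRho →
      0 < Complex.arg z → Complex.arg z < Real.pi - 2 * Real.pi / 7 →
      u₁ (omega7 * z) = omega7 ^ (-3 : ℤ) * u₂ z ∧
      u₂ (omega7 * z) = omega7 ^ (-3 : ℤ) * u₁ z := by

  have hpi := Real.pi_pos
  have hρ := structRho_pos
  -- choose a small radius ε
  obtain ⟨ε₁, hε₁pos, hs₁⟩ := small_at_zero u₁ hc₁ h0₁
  obtain ⟨ε₂, hε₂pos, hs₂⟩ := small_at_zero u₂ hc₂ h0₂
  set ε : ℝ := min (min ε₁ ε₂) (min (structRho/2) (1/200)) with hεdef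
  have hε0 : 0 < ε := lt_min (lt_min hε₁pos hε₂pos) (lt_min (by linarith) (by norm_num))
  have hερ : ε < structRho :=
    lt_of_le_of_lt (le_trans (min_le_right _ _) (min_le_left _ _)) (by linarith)
  have hε200 : ε ≤ 1/200 := le_trans (min_le_right _ _) (min_le_right _ _)
  have hsmall₁ : ∀ z ∈ slitDisk, Complex.abs z ≤ ε → Complex.abs (u₁ z) ≤ 1/2 :=
    fun z hz h => hs₁ z hz (le_trans h (le_trans (min_le_left _ _) (min_le_left _ _)))
  have hsmall₂ : ∀ z ∈ slitDisk, Complex.abs z ≤ ε → Complex.abs (u₂ z) ≤ 1/2 :=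
    fun z hz h => hs₂ z hz (le_trans h (le_trans (min_le_left _ _) (min_le_right _ _)))
  -- the two arc estimates for u₁
  have hE1 := arc_lemma u₁ hc₁ hk₁ ε hε0 hερ hsmall₁ (hpos ε hε0 hερ).1 (hpos ε hε0 hερ).2
    (Real.pi/7) (by positivity) (by linarith)
  have hE2 := arc_lemma u₁ hc₁ hk₁ ε hε0 hερ hsmall₁ (hpos ε hε0 hερ).1 (hpos ε hε0 hερ).2
    (3*Real.pi/7) (by positivity) (by linarith)
  set z₀ : ℂ := (ε:ℂ) * Complex.exp (((Real.pi/7 : ℝ):ℂ) * Complex.I) with hz₀def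
  set ζ : ℂ := (ε:ℂ) * Complex.exp (((3*Real.pi/7 : ℝ):ℂ) * Complex.I) with hζdef
  set m : ℂ := (Real.sqrt ε : ℂ) * Complex.exp (((Real.pi/7/2 : ℝ):ℂ) * Complex.I) with hmdef
  set M : ℂ := (Real.sqrt ε : ℂ) * Complex.exp (((3*Real.pi/7/2 : ℝ):ℂ) * Complex.I) with hMdef
  have hζeq : omega7 * z₀ = ζ := by
    rw [hz₀def, omega7_shift, hζdef, show 2*Real.pi/7 + Real.pi/7 = 3*Real.pi/7 by ring]
  have hz₀sec : z₀ ∈ sector := by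
    refine ⟨?_, ?_, ?_⟩
    · rw [hz₀def, polar_im]
      exact mul_pos hε0 (Real.sin_pos_of_pos_of_lt_pi (by linarith) (by linarith))
    · rw [hz₀def, polar_abs _ _ hε0.le]; exact hερ
    · rw [hz₀def, polar_arg _ _ hε0 (by linarith) (by linarith)]; linarith
  have hz₀slit : z₀ ∈ slitDisk := sector_subset_slitDisk hz₀sec
  have hz₀abs : Complex.abs z₀ = ε := by rw [hz₀def, polar_abs _ _ hε0.le]
  have hz₀ne : z₀ ≠ 0 := sector_ne_zero hz₀sec
  have hζim : 0 < ζ.im := by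
    rw [hζdef, polar_im]
    exact mul_pos hε0 (Real.sin_pos_of_pos_of_lt_pi (by linarith) (by linarith))
  have hζabs : Complex.abs ζ = ε := by rw [hζdef, polar_abs _ _ hε0.le]
  have hζslit : ζ ∈ slitDisk := ⟨by rw [← Complex.abs_apply, hζabs]; exact hερ.le, Or.inl (ne_of_gt hζim)⟩
  have hζne : ζ ≠ 0 := by
    intro h; rw [h] at hζim; simp at hζim
  have habsm : Complex.abs m = Real.sqrt ε := by
    rw [hmdef]; exact polar_abs _ _ (Real.sqrt_nonneg ε)
  -- rotation identity ω³·M = -m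
  have hω3 : omega7^3 = Complex.exp (6 * (Real.pi:ℂ) * Complex.I / 7) := by
    unfold omega7
    rw [← Complex.exp_nat_mul]
    congr 1
    push_cast
    ring
  have h3 : omega7^3 * M = -m := by
    rw [hω3, hMdef, hmdef]
    rw [show Complex.exp (6 * (Real.pi:ℂ) * Complex.I / 7) *
        ((Real.sqrt ε : ℂ) * Complex.exp (((3*Real.pi/7/2 : ℝ):ℂ) * Complex.I))
        = (Real.sqrt ε : ℂ) * Complex.exp (6 * (Real.pi:ℂ) * Complex.I / 7
            + ((3*Real.pi/7/2 : ℝ):ℂ) * Complex.I) by rw [Complex.exp_add]; ring]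
    rw [show -((Real.sqrt ε : ℂ) * Complex.exp (((Real.pi/7/2 : ℝ):ℂ) * Complex.I))
        = (Real.sqrt ε : ℂ) * Complex.exp ((Real.pi:ℂ) * Complex.I
            + ((Real.pi/7/2 : ℝ):ℂ) * Complex.I) by
      rw [Complex.exp_add, Complex.exp_pi_mul_I]; ring]
    congr 1
    push_cast
    ring
  -- sums of the two branches are small
  have htri : ∀ x y : ℂ, Complex.abs (x - y) ≤ Complex.abs x + Complex.abs y := fun x y => by
    calc Complex.abs (x - y) = Complex.abs (x + (-y)) := by ring_nf
      _ ≤ Complex.abs x + Complex.abs (-y) := Complex.abs.add_le _ _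
      _ = Complex.abs x + Complex.abs y := by rw [Complex.abs.map_neg]
  have hsum_bound : ∀ w : ℂ, w ∈ slitDisk → w ≠ 0 → Complex.abs w = ε →
      Complex.abs (u₁ w + u₂ w) ≤ 7*ε := by
    intro w hw hw0 hwabs
    have hid := sum_identity (u₁ w) (u₂ w) w (hk₁ w hw) (hk₂ w hw)
    have hsum : u₁ w + u₂ w = w * ((u₁ w)^6+(u₁ w)^5*(u₂ w)+(u₁ w)^4*(u₂ w)^2
        +(u₁ w)^3*(u₂ w)^3+(u₁ w)^2*(u₂ w)^4+(u₁ w)*(u₂ w)^5+(u₂ w)^6) := by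
      rcases mul_eq_zero.1 hid with h | h
      · exact absurd (sub_eq_zero.1 h) (hne w hw hw0)
      · exact sub_eq_zero.1 h
    rw [hsum, map_mul, hwabs]
    calc ε * Complex.abs _ ≤ ε * 7 := mul_le_mul_of_nonneg_left
          (S_bound _ _ (hsmall₁ w hw hwabs.le) (hsmall₂ w hw hwabs.le)) hε0.le
      _ = 7*ε := by ring
  have hsum₀ := hsum_bound z₀ hz₀slit hz₀ne hz₀abs
  have hsumζ := hsum_bound ζ hζslit hζne hζabs
  have hωz₀slit : omega7 * z₀ ∈ slitDisk := by rw [hζeq]; exact hζslit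
  have hsqnn := Real.sqrt_nonneg ε
  -- seed 1 : ω³ u₁(ζ) = u₂ z₀
  have haroot : (omega7^3 * u₁ ζ)^2 = z₀ * (1 + (omega7^3 * u₁ ζ)^7) := by
    have := rotated_root u₁ z₀ hωz₀slit hk₁
    rwa [hζeq] at this
  have hAest : Complex.abs ((omega7^3 * u₁ ζ) - (-m)) ≤ (1/128)*Real.sqrt ε + 7*ε := by
    have e : (omega7^3 * u₁ ζ) - (-m) = omega7^3 * (u₁ ζ - M) := by linear_combination h3
    rw [e, map_mul, map_pow, abs_omega7, one_pow, one_mul]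
    have h7ε : 0 ≤ 7*ε := by linarith
    linarith [hE2]
  have hBest : Complex.abs (u₂ z₀ - (-m)) ≤ (1/128)*Real.sqrt ε + 7*ε := by
    have e : u₂ z₀ - (-m) = (u₁ z₀ + u₂ z₀) - (u₁ z₀ - m) := by ring
    rw [e]
    calc Complex.abs ((u₁ z₀ + u₂ z₀) - (u₁ z₀ - m))
        ≤ Complex.abs (u₁ z₀ + u₂ z₀) + Complex.abs (u₁ z₀ - m) := htri _ _
      _ ≤ 7*ε + (1/128)*Real.sqrt ε := by linarith [hE1]
      _ = (1/128)*Real.sqrt ε + 7*ε := by ring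
  have habsa : Complex.abs (omega7^3 * u₁ ζ) ≤ 1/2 := by
    rw [map_mul, map_pow, abs_omega7, one_pow, one_mul]
    exact hsmall₁ ζ hζslit hζabs.le
  have hseed1 : omega7^3 * u₁ ζ = u₂ z₀ :=
    near_point_unique z₀ (-m) _ _ ε hε0 hε200 hz₀abs
      (by rw [Complex.abs.map_neg, habsm]) hAest hBest habsa
      (hsmall₂ z₀ hz₀slit hz₀abs.le) haroot (hk₂ z₀ hz₀slit)
  -- seed 2 : ω³ u₂(ζ) = u₁ z₀
  have ha'root : (omega7^3 * u₂ ζ)^2 = z₀ * (1 + (omega7^3 * u₂ ζ)^7) := by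
    have := rotated_root u₂ z₀ hωz₀slit hk₂
    rwa [hζeq] at this
  have hA'est : Complex.abs ((omega7^3 * u₂ ζ) - m) ≤ (1/128)*Real.sqrt ε + 7*ε := by
    have e : (omega7^3 * u₂ ζ) - m = omega7^3 * (u₂ ζ + M) := by linear_combination -h3
    rw [e, map_mul, map_pow, abs_omega7, one_pow, one_mul]
    have e2 : u₂ ζ + M = (u₁ ζ + u₂ ζ) - (u₁ ζ - M) := by ring
    rw [e2]
    calc Complex.abs ((u₁ ζ + u₂ ζ) - (u₁ ζ - M))
        ≤ Complex.abs (u₁ ζ + u₂ ζ) + Complex.abs (u₁ ζ - M) := htri _ _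
      _ ≤ 7*ε + (1/128)*Real.sqrt ε := by linarith [hE2]
      _ = (1/128)*Real.sqrt ε + 7*ε := by ring
  have hB'est : Complex.abs (u₁ z₀ - m) ≤ (1/128)*Real.sqrt ε + 7*ε := by
    have h7ε : 0 ≤ 7*ε := by linarith
    linarith [hE1]
  have habsa' : Complex.abs (omega7^3 * u₂ ζ) ≤ 1/2 := by
    rw [map_mul, map_pow, abs_omega7, one_pow, one_mul]
    exact hsmall₂ ζ hζslit hζabs.le
  have hseed2 : omega7^3 * u₂ ζ = u₁ z₀ :=
    near_point_unique z₀ m _ _ ε hε0 hε200 hz₀abs habsm hA'est hB'est habsa'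
      (hsmall₁ z₀ hz₀slit hz₀abs.le) ha'root (hk₁ z₀ hz₀slit)
  -- propagate over the whole sector
  have hmapsec : ∀ w ∈ sector, omega7 * w ∈ slitDisk := fun w hw =>
    (region_mem w (sector_region w hw).1 (sector_region w hw).2.1 (sector_region w hw).2.2).2.2.1
  have hcont₁ : ContinuousOn (fun w => omega7^3 * u₁ (omega7 * w)) sector :=
    continuousOn_const.mul (hc₁.comp ((continuous_const.mul continuous_id).continuousOn) hmapsec)
  have hcont₂ : ContinuousOn (fun w => omega7^3 * u₂ (omega7 * w)) sector :=
    continuousOn_const.mul (hc₂.comp ((continuous_const.mul continuous_id).continuousOn) hmapsec)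
  have hEq1 : ∀ w ∈ sector, omega7^3 * u₁ (omega7 * w) = u₂ w :=
    branches_eq _ u₂ hcont₁ (hc₂.mono sector_subset_slitDisk)
      (fun w hw => rotated_root u₁ w (hmapsec w hw) hk₁)
      (fun w hw => hk₂ w (sector_subset_slitDisk hw))
      z₀ hz₀sec (by rw [hζeq]; exact hseed1)
  have hEq2 : ∀ w ∈ sector, omega7^3 * u₂ (omega7 * w) = u₁ w :=
    branches_eq _ u₁ hcont₂ (hc₁.mono sector_subset_slitDisk)
      (fun w hw => rotated_root u₂ w (hmapsec w hw) hk₂)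
      (fun w hw => hk₁ w (sector_subset_slitDisk hw))
      z₀ hz₀sec (by rw [hζeq]; exact hseed2)
  -- extension to the closed region by a limiting argument
  intro z habs h0 h1
  obtain ⟨him, hzslit, hωzslit, hz0⟩ := region_mem z habs h0 h1
  have hscale : ∀ t ∈ Set.Ioo (0:ℝ) 1, (t:ℂ)*z ∈ sector := by
    rintro t ⟨ht0, ht1⟩
    refine ⟨?_, ?_, ?_⟩
    · have e : ((t:ℂ)*z).im = t * z.im := by simp [Complex.mul_im]
      rw [e]; exact mul_pos ht0 him
    · rw [map_mul, Complex.abs_ofReal, _root_.abs_of_pos ht0]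
      calc t * Complex.abs z ≤ t * structRho := mul_le_mul_of_nonneg_left habs ht0.le
        _ < 1 * structRho := mul_lt_mul_of_pos_right ht1 structRho_pos
        _ = structRho := one_mul _
    · rw [Complex.arg_real_mul z ht0]; exact h1
  have hIoo : Set.Ioo (0:ℝ) 1 ∈ nhdsWithin (1:ℝ) (Set.Iio 1) :=
    Ioo_mem_nhdsLT_of_mem (by constructor <;> norm_num)
  have htendc : Filter.Tendsto (fun t:ℝ => (t:ℂ)*z) (nhdsWithin 1 (Set.Iio 1)) (nhds z) := by
    have hcont : Continuous (fun t:ℝ => (t:ℂ)*z) := Complex.continuous_ofReal.mul continuous_const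
    have h2 : Filter.Tendsto (fun t:ℝ => (t:ℂ)*z) (nhdsWithin 1 (Set.Iio 1)) (nhds (((1:ℝ):ℂ)*z)) :=
      (hcont.tendsto 1).mono_left nhdsWithin_le_nhds
    simpa using h2
  have htendin : Filter.Tendsto (fun t:ℝ => (t:ℂ)*z) (nhdsWithin 1 (Set.Iio 1))
      (nhdsWithin z slitDisk) := by
    rw [tendsto_nhdsWithin_iff]
    refine ⟨htendc, ?_⟩
    filter_upwards [hIoo] with t ht
    exact sector_subset_slitDisk (hscale t ht)
  have htendω : Filter.Tendsto (fun t:ℝ => omega7 * ((t:ℂ)*z)) (nhdsWithin 1 (Set.Iio 1))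
      (nhdsWithin (omega7 * z) slitDisk) := by
    rw [tendsto_nhdsWithin_iff]
    constructor
    · have hcont : Continuous (fun t:ℝ => omega7 * ((t:ℂ)*z)) :=
        continuous_const.mul (Complex.continuous_ofReal.mul continuous_const)
      have h2 : Filter.Tendsto (fun t:ℝ => omega7 * ((t:ℂ)*z)) (nhdsWithin 1 (Set.Iio 1))
          (nhds (omega7 * (((1:ℝ):ℂ)*z))) :=
        (hcont.tendsto 1).mono_left nhdsWithin_le_nhds
      simpa using h2
    · filter_upwards [hIoo] with t ht
      exact hmapsec _ (hscale t ht)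
  have hLA : Filter.Tendsto (fun t:ℝ => u₂ ((t:ℂ)*z)) (nhdsWithin 1 (Set.Iio 1))
      (nhds (u₂ z)) := (hc₂ z hzslit).tendsto.comp htendin
  have hLA' : Filter.Tendsto (fun t:ℝ => u₁ ((t:ℂ)*z)) (nhdsWithin 1 (Set.Iio 1))
      (nhds (u₁ z)) := (hc₁ z hzslit).tendsto.comp htendin
  have hLB : Filter.Tendsto (fun t:ℝ => omega7^3 * u₁ (omega7*((t:ℂ)*z)))
      (nhdsWithin 1 (Set.Iio 1)) (nhds (omega7^3 * u₁ (omega7*z))) :=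
    tendsto_const_nhds.mul ((hc₁ _ hωzslit).tendsto.comp htendω)
  have hLB' : Filter.Tendsto (fun t:ℝ => omega7^3 * u₂ (omega7*((t:ℂ)*z)))
      (nhdsWithin 1 (Set.Iio 1)) (nhds (omega7^3 * u₂ (omega7*z))) :=
    tendsto_const_nhds.mul ((hc₂ _ hωzslit).tendsto.comp htendω)
  have hev1 : (fun t:ℝ => omega7^3 * u₁ (omega7*((t:ℂ)*z)))
      =ᶠ[nhdsWithin 1 (Set.Iio 1)] (fun t:ℝ => u₂ ((t:ℂ)*z)) := by
    filter_upwards [hIoo] with t ht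
    exact hEq1 _ (hscale t ht)
  have hev2 : (fun t:ℝ => omega7^3 * u₂ (omega7*((t:ℂ)*z)))
      =ᶠ[nhdsWithin 1 (Set.Iio 1)] (fun t:ℝ => u₁ ((t:ℂ)*z)) := by
    filter_upwards [hIoo] with t ht
    exact hEq2 _ (hscale t ht)
  have heq1 : omega7^3 * u₁ (omega7*z) = u₂ z :=
    tendsto_nhds_unique (Filter.Tendsto.congr' hev1 hLB) hLA
  have heq2 : omega7^3 * u₂ (omega7*z) = u₁ z :=
    tendsto_nhds_unique (Filter.Tendsto.congr' hev2 hLB') hLA'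
  have hinv : omega7 ^ (-3:ℤ) * omega7^3 = 1 := by
    rw [← zpow_natCast omega7 3, ← zpow_add₀ omega7_ne_zero]
    norm_num
  constructor
  · calc u₁ (omega7*z) = (omega7 ^ (-3:ℤ) * omega7^3) * u₁ (omega7*z) := by rw [hinv, one_mul]
      _ = omega7 ^ (-3:ℤ) * (omega7^3 * u₁ (omega7*z)) := by ring
      _ = omega7 ^ (-3:ℤ) * u₂ z := by rw [heq1]
  · calc u₂ (omega7*z) = (omega7 ^ (-3:ℤ) * omega7^3) * u₂ (omega7*z) := by rw [hinv, one_mul]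
      _ = omega7 ^ (-3:ℤ) * (omega7^3 * u₂ (omega7*z)) := by ring
      _ = omega7 ^ (-3:ℤ) * u₁ z := by rw [heq2]
end

section
/- The constant κ₁ = α₁/β₁ in Knuth's asymptotics, given by κ₁ = −5/(μ⁴+2μ³+3μ²+4μ) − 1 where μ = τ₂/τ, τ = (2/5)^{1/7}, and τ₂ is the unique real root of 500t^{35}+3900t^{28}+13540t^{21}+27708t^{14}+37500t^{7}+3125, is a root of the polynomial 23x^5 − 41x^4 + 10x^3 − 6x^2 − x − 1. -/
set_option maxHeartbeats 2000000 in
/-- Knuth's constant `κ₁`.  With `τ = (2/5)^{1/7}`, `τ₂` a real root of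
`500t³⁵+3900t²⁸+13540t²¹+27708t¹⁴+37500t⁷+3125`, `μ = τ₂/τ`, the constant
`κ₁ = −5/(μ⁴+2μ³+3μ²+4μ) − 1` is a root of `23x⁵ − 41x⁴ + 10x³ − 6x² − x − 1`. -/
theorem knuth_constant_kappa1 (τ τ₂ μ κ₁ : ℝ)
    (hτ : τ = (2 / 5 : ℝ) ^ ((1 : ℝ) / 7))
    (hτ₂ : 500 * τ₂ ^ 35 + 3900 * τ₂ ^ 28 + 13540 * τ₂ ^ 21 + 27708 * τ₂ ^ 14 +
        37500 * τ₂ ^ 7 + 3125 = 0)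
    (hμ : μ = τ₂ / τ)
    (hκ₁ : κ₁ = -5 / (μ ^ 4 + 2 * μ ^ 3 + 3 * μ ^ 2 + 4 * μ) - 1) :
    23 * κ₁ ^ 5 - 41 * κ₁ ^ 4 + 10 * κ₁ ^ 3 - 6 * κ₁ ^ 2 - κ₁ - 1 = 0 := by
  have hτpos : (0:ℝ) < τ := by
    rw [hτ]; exact Real.rpow_pos_of_pos (by norm_num) _
  have hτ7 : τ ^ 7 = 2 / 5 := by
    rw [hτ, ← Real.rpow_natCast ((2/5:ℝ) ^ ((1:ℝ)/7)) 7, ← Real.rpow_mul (by norm_num)]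
    norm_num
  have hτ₂' : τ₂ = μ * τ := by
    rw [hμ]; field_simp
  have e1 : τ₂ ^ 7 = μ ^ 7 * (2/5) := by
    rw [hτ₂', show (μ * τ) ^ 7 = μ ^ 7 * τ ^ 7 by ring, hτ7]
  have p35 : τ₂ ^ 35 = μ ^ 35 * (2/5)^5 := by
    rw [show (35:ℕ) = 7 * 5 from rfl, pow_mul, e1]; ring
  have p28 : τ₂ ^ 28 = μ ^ 28 * (2/5)^4 := by
    rw [show (28:ℕ) = 7 * 4 from rfl, pow_mul, e1]; ring
  have p21 : τ₂ ^ 21 = μ ^ 21 * (2/5)^3 := by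
    rw [show (21:ℕ) = 7 * 3 from rfl, pow_mul, e1]; ring
  have p14 : τ₂ ^ 14 = μ ^ 14 * (2/5)^2 := by
    rw [show (14:ℕ) = 7 * 2 from rfl, pow_mul, e1]; ring
  have h35 : 128*μ^35 + 2496*μ^28 + 21664*μ^21 + 110832*μ^14 + 375000*μ^7 + 78125 = 0 := by
    rw [p35, p28, p21, p14, e1] at hτ₂
    linear_combination (25:ℝ) * hτ₂
  have hfac : (2*μ^5 + 4*μ^4 + 6*μ^3 + 8*μ^2 + 10*μ + 5) * ((15625:ℝ) + (-31250:ℝ) * μ^1 + (37500:ℝ) * μ^2 + (-43750:ℝ) * μ^3 + (52500:ℝ) * μ^4 + (-61250:ℝ) * μ^5 + (73500:ℝ) * μ^6 + (-17000:ℝ) * μ^7 + (-34600:ℝ) * μ^8 + (36200:ℝ) * μ^9 + (-30940:ℝ) * μ^10 + (29680:ℝ) * μ^11 + (-18816:ℝ) * μ^12 + (12152:ℝ) * μ^13 + (2624:ℝ) * μ^14 + (-13480:ℝ) * μ^15 + (11360:ℝ) * μ^16 + (-6496:ℝ) * μ^17 + (4032:ℝ) * μ^18 + (-1568:ℝ)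 * μ^19 + (784:ℝ) * μ^20 + (1088:ℝ) * μ^21 + (-2176:ℝ) * μ^22 + (1312:ℝ) * μ^23 + (-448:ℝ) * μ^24 + (224:ℝ) * μ^25 + (64:ℝ) * μ^28 + (-128:ℝ) * μ^29 + (64:ℝ) * μ^30) = 0 := by
    linear_combination h35
  have hRpos : (0:ℝ) < (15625:ℝ) + (-31250:ℝ) * μ^1 + (37500:ℝ) * μ^2 + (-43750:ℝ) * μ^3 + (52500:ℝ) * μ^4 + (-61250:ℝ) * μ^5 + (73500:ℝ) * μ^6 + (-17000:ℝ) * μ^7 + (-34600:ℝ) * μ^8 + (36200:ℝ) * μ^9 + (-30940:ℝ) * μ^10 + (29680:ℝ) * μ^11 + (-18816:ℝ) * μ^12 + (12152:ℝ) * μ^13 + (2624:ℝ) * μ^14 + (-13480:ℝ) * μ^15 + (11360:ℝ) * μ^16 + (-6496:ℝ) * μ^17 + (4032:ℝ) * μ^18 + (-1568:ℝ) * μ^19 + (784:ℝ) * μ^20 + (1088:ℝ) * μ^21 + (-2176:ℝ) * μ^22 + (1312:ℝ) * μ^23 + (-448:ℝ) * μ^24 + (224:ℝ) * μ^25 + (64:ℝ)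 * μ^28 + (-128:ℝ) * μ^29 + (64:ℝ) * μ^30 := by
    have hsos : (15625:ℝ) + (-31250:ℝ) * μ^1 + (37500:ℝ) * μ^2 + (-43750:ℝ) * μ^3 + (52500:ℝ) * μ^4 + (-61250:ℝ) * μ^5 + (73500:ℝ) * μ^6 + (-17000:ℝ) * μ^7 + (-34600:ℝ) * μ^8 + (36200:ℝ) * μ^9 + (-30940:ℝ) * μ^10 + (29680:ℝ) * μ^11 + (-18816:ℝ) * μ^12 + (12152:ℝ) * μ^13 + (2624:ℝ) * μ^14 + (-13480:ℝ) * μ^15 + (11360:ℝ) * μ^16 + (-6496:ℝ) * μ^17 + (4032:ℝ) * μ^18 + (-1568:ℝ) * μ^19 + (784:ℝ) * μ^20 + (1088:ℝ) * μ^21 + (-2176:ℝ) * μ^22 + (1312:ℝ) * μ^23 + (-448:ℝ) * μ^24 + (224:ℝ) * μ^25 + (64:ℝ) * μ^28 + (-128:ℝ) * μ^29 + (64:ℝ) * μ^30 = 1 + (((69631926481786/642046648437:ℝ) + (-149736092781504/241697998583:ℝ) * μ^1 + (-2398259053244639/771228814248:ℝ) * μ^2 + (2370157221448903/276671446435:ℝ)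 * μ^3 + (10505038132280776/781430076317:ℝ) * μ^4 + (-31311726158530734/1088313053783:ℝ) * μ^5 + (-6057466542938083/296587462777:ℝ) * μ^6 + (39434291249986361/1060254968262:ℝ) * μ^7 + (7853209417363547/573400062206:ℝ) * μ^8 + (-21860295662970883/1015948710038:ℝ) * μ^9 + (-809091804680777/196986934916:ℝ) * μ^10 + (5828033367115209/1053957044707:ℝ) * μ^11 + (162432784517727/357950376335:ℝ) * μ^12 + (-178927096444239/344350408885:ℝ) * μ^13 + (-8490595153912/1053000152821:ℝ) * μ^14 + (8424001222568/1061324394239:ℝ) * μ^15)^2 + ((16209852951299/260875294271:ℝ) + (365812942070101/440821104429:ℝ) * μ^1 + (-2614399227304883/901394120943:ℝ) * μ^2 + (-4677975415060701/617704056751:ℝ) * μ^3 + (13908444162831633/772384946255:ℝ) * μ^4 + (11951676421060891/646202679263:ℝ) * μ^5 + (-10668051578837209/293455623485:ℝ) * μ^6 + (-16809509118360951/911673162626:ℝ) * μ^7 + (31621056219175039/1013721878410:ℝ) * μ^8 + (5084823949018998/609541222897:ℝ) * μ^9 + (-12715330571767961/1046739703605:ℝ) * μ^10 + (-577840800896213/364269482333:ℝ)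 * μ^11 + (2078065123506247/1054781065107:ℝ) * μ^12 + (38343122412404/446888597017:ℝ) * μ^13 + (-92086719009725/1014056572641:ℝ) * μ^14)^2 + (996353035313864323750864263601547180697446269719601014428346238413757/996353035313864323750908713654548918455002017191853305091858917172401:ℝ) * (1)^2 + (697217296323673279241577064342782464944605258171850341673592511890063193171156627126999959227260478353818510999327/697217296323673279244963829703973571143736295657727818328025035270475515120540958562377099981736873792156452207930:ℝ) * (μ^1)^2 + (2487571607244414542829527595766641447991060139064622321412948354378114027045820893304997817137002254216921883190356576702705582098489597264191517212160764547873/2487571607244414542966492686693566389732738087924542551330598437176910474948347484815240585551256480899715061122897823624164727785085894380086934910793295555520:ℝ) * (μ^2)^2 + (25925562245438607325900715270034814340991598823639234594476163651034258740675948444480197021048884173836112902992365191418493915944968124153577699319156550750315667709590710135552473687219209089980605023/25925562245438607325781695493747142225994681947694115281241703976921389858812188144458499734708885880570766905294286263141987293913762407570236924952350663300306478043944048339491738582182719333695527800:ℝ) * (μ^3)^2 + (57239392079046125673275178227514420793507145083323448163777643058089915235791884596948352119792425884317465911670656683994372905493534619773399865865086368190402348320932039627458760838013054466984267472394701529254829673808338300268788726913013997/57239392079046125700284617850303551765965882131282878898308804045368132198578838308832258321667909940238006231624823908306413223501537309825367818835247248102440634040294628818208280389176938658826903405171313246525265578717656014883655828652638800:ℝ)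 * (μ^4)^2 + (17190699403153748133168886885233913522955809181374794829707947900378575424668607853396392860187805283744816618446650949675508291772366739545972442140297209195622275170632168489279046693921066444223071859137539491571858140065097956282908252543485773062160350126807963060769845798442371350782262687/17190699403153748128385329119018810442909767025935844649721912725168794145891499376599342407840173473006011633055084692687533399892232491494490625163831307430725254428911226750754168276326523474116448194912876674639961886391029990291319372077939667372910213907933680667412113008869133930499133400:ℝ) * (μ^5)^2 + (16748915439836690541995612972482702245506980916634333922450059309539640776646467863430195079127651084289069033290342295320762527683850580932936530249066959989640951814143800509920197097593159665598058745860799192749118316731146981982328711419945982494227669507597191001820768079562164447434341768215778149487700450709333766051498181/16748915439836690551081390338158537088844518576004342972300857375846805455176645453952648702964565320964744964914698776788137937120960963817736378564904376898984953286313077391345449082212178601966078591271678602277004757874366803035504878090750653619753356127209804771738608194262036105373818506637176304045702226005890069093908600:ℝ) * (μ^6)^2 + (20976702858599142249960216166556757681989099778267213544805095342154767742023631713575725213474252317268480641843506057766716790851929505875909369361878203487350386975175742210152438285732447375750077866153054142077137919626734535979620975065729832309454807225015940173294145935293984063211560965806911589879878258107768831780587463242063791991104997008117181944387/20976702858599142253957464484386057870078855676843955717155533618989655719052320905465257362350733473375109148786123989604922470832364350786632303227093414152605139881435562088661415571519810760044370739815347047299073448006306194252979318904932072775226382852243393991279387138417648697299468289161317048991392448619786389929018495157881977883795571227810387724810:ℝ)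 * (μ^7)^2 + (15569949888163059624716414527871890049943945769571881947312864127732921015741623015633868569263718121974041406845637760095015346182193179035560615330441169935337522658133643998437854050599517796800076066440459390039891963239855273560098876003672417570478929590304746966585402900967671821529831521412384969669577143448494052146426637861192565476044085592501/15569949888163059619473017124632529451919902072623297146249196839799890325422838903299421090323906034957210093453629856006592113303244077629982628679346894224790062818398655420063812476904529736664342729941165227621619858863121641570389157878704934242714687349433881658798608970487915707677077761668490598367378227879078647876384826663544008466555574961100:ℝ) * (μ^8)^2 + (66316868513182719003659455003670246714056155335024635546795924273166106775789234316824321936295966928188785186229687531450823338802304871065052975841892553363506451635489843730099369852569203315862307994149339062264626321959910650557434096900330362420752531984887987480195091213935339074730922081383616269753797/66316868513182719049925176439744738266350998243822784683110136438880295297288736664976561959960512281649686685305207595370201069509427224585235400158724160878671979520179112412550368672157532618505200911679864770563428052744846108665827290427357688564846219542393334319953435446683286999857331166095555842476700:ℝ) * (μ^9)^2 + (174406506773541170801731207097174861139971053487325595540456419222211707674575820499943056914654862481971140011871387748071250580550151374837694397804267224509102299335138619750345682726784237593326537882948506278227215430656697507461757093101966830064491711679481896017/174406506773541170779679555343279784083134438366348490554739175854227477690998251165137869855640102416869656142663898484390760690863884968759076940643147239089395189202238534447071344373151706460009403323179816894420985806579419899001045410219848101482495037971901197200:ℝ)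 * (μ^10)^2 + (10038605490592700186101796068108545782329025876686761090920857560583850857591141885065324614312660557399251756380985328714402194212706829826360177476891889617483941329757912889804542979510941004659827965956282169960389868280749/10038605490592700188846577463149217658340182555489718948292859020229225585011344171868655540330381886828742321165927790351368282467073698883052495509328016784855656988110607632383408776651238830334851745408263414222054387387390:ℝ) * (μ^11)^2 + (2263740960806387408967501590114611988520931152118015102739036132713749434662747057593552937692269272096906108281547704869151217908596445153326566543407040879636383404569625232642737779/2263740960806387408914193801947814901954423429892325934971251392813693804187426886374844394804747257488744899021311346281061467619032875391790437864384513544424377077127840516178530300:ℝ) * (μ^12)^2 + (15958226771385619432853158568977114955685474322059995360361039024160919424922370720633064627629766521080395983468779562864979194881482881/15958226771385619433005054323879001457175922205416930402034426953250368435630963611185003565811684544378549717461153812817847914677181725:ℝ) * (μ^13)^2 + (272073346616941064385648013130890989760450461141703377578512482266435071655911281803056649131/272073346616941064385597912843054813213495265047977340825500798774225301002846072467459638465:ℝ) * (μ^14)^2 + (1126409469806780296389120/1126409469806780296389121:ℝ) * (μ^15)^2 + (53132637082711974540954/660953951786119853053566449077939445938004507:ℝ) * (1 - μ^1)^2 +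 (16868980883566057339178971485733611323057144379988091074157224038323537/3271920360296419152426856427747356427479542382045896145625883379897111367912142084524553495:ℝ) * (μ^1 + μ^2)^2 + (181054870017893836493536157649583089041339224835432433829169666412547842856780712360336241311711256605734993817993017/6440952969295704187313008048131408044192484887286861904179225190157952463013784640500268923002422338907698823818107404071247937887522824:ℝ) * (μ^2 - μ^3)^2 + (416755854775481840367680049566703879462035387724220437748519692038712503666935829302403444039242175188860581703798865718975750234760845834368424000667451489349/5834585945786159315594744971619925051748919224845194675245249852342914584822912520961393512800558833109536275625981354053675832846344641193648489299499071503141185038383789660380:ℝ) * (μ^3 + μ^4)^2 + (1289326282412130995380730380494216424263784116610295978809670767479175582004756432398711357820829834814941141925843650845294997336626159764713355045568519096962463140746163527944053547678039599052087844358951/10375007303530912359560310663730291376385978632778110177322315152375592462835896423108469004807920149154880870417050820481425548859827457618678678830004826455533615836336982222767937063953451533527122741345725644776347221148432:ℝ) * (μ^4 - μ^5)^2 + (419768190798786981268294866696412412655481631790253389996534304451626313458046979519494449217297154115926422802800181478020708518222423245755691338970310333302471921040560742782406388731611990598365732500997145473109956627343173923772379948007925135/3811918225938636233480594401289190182890246945195488256551231701775053963655836431541046819784520652102579364587046827627248666672614966439984219218832225251878377617866509091326345421172217488700736720368853426046967978948825703955379786275131635230124040623638626736:ℝ)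 * (μ^5 + μ^6)^2 + (247189145650921135071845902729347854713428651580195950160352611280668225201542256058060696639882080398625218558618276754202767936356442713381065426345021063602718715677760318461649478654827546795591924718858999208477506626216229257196903532099890998409289555160243376174341187411970054713/6434106601420280921086628786814826762962022682188718686438624886456315115352354818698852436201432801028665344497272849306765355525775922221457991227149917723854018399152208435409916372505437055119766540703541849981811789536729042471059234126370317452410314208729328419466953746840479381315998770366531534920:ℝ) * (μ^6 - μ^7)^2 + (6426564382747664870380725015858467875945730898851438263326267624245196698670964978811148127508261878094041676577034055005694308545167047714891260805813583309791023759489146349661557109333948651532595649820707445920282628362438110521950141184330823824132433417779601968417685903706314371131677080381579976050533/272424839896445889824063894526078360434065582766015455924904896463431772283440766177420679908398361772600196114135881420305860951626129417074177516066751451815327025153676675326295365095487724696347818371367046070414287842776785355690326355201744838447807310803968591981127319003747153906939076384031363860825942609445299517585800:ℝ) * (μ^7 - μ^8)^2 + (11668823554202085738702625014839828570203590966848771565199311193924056047839670685124007869937815441306698877767409712942628477410006312949094967066403510306092266415941344733078284068547416414848780960423349918571051600573374996433341327243589826018369409891695223/116560605087838894604712131589460974041859886762756030711038065574014040532313110211355139121903627554655118347118331272917855397226084983722760976943790005472133967476859891546523621431903519831000690515153443671181138437943596904578942806392603425783433071196467543667050434206017016:ℝ)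 * (μ^8 + μ^9)^2 + (96143748119581700913725100320764096244084191146228505189830821908482771056782047634702551403701505830664460348092293389899911196041593762416513222017172920123498907902256029231958383456210259130465808253141150351767049056038969/725002949968089127783579651260331020554655921011231819214521540514831506436410667070858857306865077572412561154336882996264926753361394747613976728391668876153834644900927164353694857382255855932889111604030477546494191245681960062111316391925320:ℝ) * (μ^9 - μ^10)^2 + (92744036215141626390521059273250816635103494436651121639145265537780834184031469024037624024857328855423033358044254002444576871924396082626529723514362131094822611515712833115647261/1162104463911748158439700240251248844677229168037022354761639854245254792621247054292902695833507071591684768160083834502254429988371160983706784481971905207509898725756894797338125532450625168300933364:ℝ) * (μ^10 + μ^11)^2 + (19507516693460873457113366769152431073700303364815829095992022827055395728009800174753484229199656645066187502357202693978299394518915968431/856531897479779420109129975710509898649298087154136344604651355834236808444053346908764389304507823650359088749253552098457709325352420577246579997606746440820:ℝ) * (μ^11 - μ^12)^2 + (486051944721202353669276183676023618651988712407528736685867232108280925478721415921212211224/172835720999199597052821348800034836515061360610823168036062815923522842083453835319571291377047565391191293611175:ℝ) * (μ^12 + μ^13)^2 + (185986825838915649535205193518829563016261641716/1783583393823555362458553025772552865980460108181865287772261933670955:ℝ)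 * (μ^13 - μ^14)^2) := by ring
    rw [hsos]
    positivity
  have hq : 2*μ^5 + 4*μ^4 + 6*μ^3 + 8*μ^2 + 10*μ + 5 = 0 := by
    rcases mul_eq_zero.mp hfac with h | h
    · exact h
    · exact absurd h (ne_of_gt hRpos)
  have hD : μ ^ 4 + 2 * μ ^ 3 + 3 * μ ^ 2 + 4 * μ ≠ 0 := by
    intro h0
    have h1 : (1:ℝ) = 0 := by
      linear_combination ((1/5:ℝ) + (18/115:ℝ)*μ + (12/115:ℝ)*μ^2 + (8/115:ℝ)*μ^3) * hq + ((-16/23:ℝ) + (-2/5:ℝ)*μ + (-36/115:ℝ)*μ^2 + (-24/115:ℝ)*μ^3 + (-16/115:ℝ)*μ^4) * h0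
    exact one_ne_zero h1
  have hg : (κ₁ + 1) * (μ ^ 4 + 2 * μ ^ 3 + 3 * μ ^ 2 + 4 * μ) + 5 = 0 := by
    rw [hκ₁, sub_add_cancel, div_mul_cancel₀ _ hD]
    ring
  linear_combination ((-1/5:ℝ) + (-1/5:ℝ)*κ₁ + (-6/5:ℝ)*κ₁^2 + (2:ℝ)*κ₁^3 + (39/5:ℝ)*κ₁^4 + (23/5:ℝ)*κ₁^5 + (2/5:ℝ)*μ*κ₁ + (12/5:ℝ)*μ*κ₁^3 + (32/5:ℝ)*μ*κ₁^4 + (18/5:ℝ)*μ*κ₁^5 + (-4/5:ℝ)*μ^2*κ₁^2 + (4/5:ℝ)*μ^2*κ₁^3 + (4:ℝ)*μ^2*κ₁^4 + (12/5:ℝ)*μ^2*κ₁^5 + (8/5:ℝ)*μ^3*κ₁^3 + (16/5:ℝ)*μ^3*κ₁^4 + (8/5:ℝ)*μ^3*κ₁^5) * hq + ((-16:ℝ)*κ₁^4 + (2/5:ℝ)*μ + (12/5:ℝ)*μ*κ₁^2 + (-32/5:ℝ)*μ*κ₁^3 + (-46/5:ℝ)*μ*κ₁^4 + (-4/5:ℝ)*μ^2*κ₁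 + (4/5:ℝ)*μ^2*κ₁^2 + (-28/5:ℝ)*μ^2*κ₁^3 + (-36/5:ℝ)*μ^2*κ₁^4 + (8/5:ℝ)*μ^3*κ₁^2 + (-16/5:ℝ)*μ^3*κ₁^3 + (-24/5:ℝ)*μ^3*κ₁^4 + (-16/5:ℝ)*μ^4*κ₁^3 + (-16/5:ℝ)*μ^4*κ₁^4) * hg
end

section
/- Schur polynomial closed form for meanders: for walks on ℕ with step set {−a, +c} (a,c positive, coprime) starting at altitude h ≥ a, with u_1,…,u_a the small roots of 1 − z(u^{−a}+u^c) = 0, the generating function F_i(z) of walks ending at altitude i (0 ≤ i ≤ a−1) equals ((−1)^{a−i−1}/z)·s_{(h+1, 1^{a−i−1}, 0^{i})}(u_1,…,u_a), where s_λ denotes the Schur polynomial in a variables. -/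
open PowerSeries

/-- `meanderCount a c h n i` = number of walks of length `n` on `ℕ` with altitude
jumps `−a, +c`, starting at altitude `h`, staying nonnegative, ending at altitude `i`. -/
noncomputable def meanderCount (a c h : ℕ) (n : ℕ) (i : ℤ) : ℕ :=
  Nat.card {w : List ℤ //
    w.length = n ∧ (∀ s ∈ w, s = -(a : ℤ) ∨ s = (c : ℤ)) ∧
    (∀ m : ℕ, 0 ≤ (h : ℤ) + (w.take m).sum) ∧ (h : ℤ) + w.sum = i}

/-- A series `Σ_n c_n z^n` rewritten in the variable `x` with `z = x^a`
(the `a` small roots of the kernel are power series in `x = z^{1/a}`). -/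
noncomputable def liftRootA (a : ℕ) (cnt : ℕ → ℕ) : PowerSeries ℂ :=
  PowerSeries.mk fun m => if a ∣ m then (cnt (m / a) : ℂ) else 0

/-- The partition `λ = (h+1, 1^{a−i−1}, 0^i)` (0-indexed entries). -/
def schurLambda (a h i : ℕ) (j : Fin a) : ℕ :=
  if (j : ℕ) = 0 then h + 1 else if (j : ℕ) ≤ a - i - 1 then 1 else 0

namespace MeanderAux

def walkSet (a c h : ℕ) (n : ℕ) (i : ℤ) : Set (List ℤ) :=
  {w | w.length = n ∧ (∀ s ∈ w, s = -(a : ℤ) ∨ s = (c : ℤ)) ∧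
    (∀ m : ℕ, 0 ≤ (h : ℤ) + (w.take m).sum) ∧ (h : ℤ) + w.sum = i}

lemma meanderCount_eq_ncard (a c h n : ℕ) (i : ℤ) :
    meanderCount a c h n i = (walkSet a c h n i).ncard := by
  rw [meanderCount, ← Nat.card_coe_set_eq]
  rfl

lemma walkSet_finite (a c h n : ℕ) (i : ℤ) : (walkSet a c h n i).Finite := by
  apply Set.Finite.of_finite_image (f := fun w => fun k : Fin n => decide (w.getD k 0 = (c : ℤ)))
  · exact Set.toFinite _
  · intro w hw w' hw' hf
    obtain ⟨hl, hm, -, -⟩ := hw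
    obtain ⟨hl', hm', -, -⟩ := hw'
    apply List.ext_getElem (by omega)
    intro k hk hk'
    have hfk := congrFun hf ⟨k, by omega⟩
    simp only [List.getD_eq_getElem?_getD, List.getElem?_eq_getElem hk,
      List.getElem?_eq_getElem hk', Option.getD_some, decide_eq_decide] at hfk
    have h1 := hm _ (List.getElem_mem hk)
    have h2 := hm' _ (List.getElem_mem hk')
    rcases h1 with h1 | h1 <;> rcases h2 with h2 | h2 <;> rw [h1, h2] at hfk ⊢ <;> tauto

lemma mc_zero (a c h : ℕ) (i : ℤ) :
    meanderCount a c h 0 i = if i = (h : ℤ) then 1 else 0 := by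
  rw [meanderCount_eq_ncard]
  split_ifs with hi
  · subst hi
    have : walkSet a c h 0 (h : ℤ) = {[]} := by
      ext w
      simp only [walkSet, Set.mem_setOf_eq, Set.mem_singleton_iff, List.length_eq_zero_iff]
      constructor
      · rintro ⟨rfl, -, -, -⟩; rfl
      · rintro rfl
        refine ⟨rfl, by simp, ?_, by simp⟩
        intro m; simp
    rw [this, Set.ncard_singleton]
  · have : walkSet a c h 0 i = ∅ := by
      ext w
      simp only [walkSet, Set.mem_setOf_eq, Set.mem_empty_iff_false, iff_false, not_and,
        List.length_eq_zero_iff]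
      rintro rfl h2 h3 h4
      simp at h4
      exact hi h4.symm
    rw [this, Set.ncard_empty]

lemma mc_neg (a c h n : ℕ) (i : ℤ) (hi : i < 0) : meanderCount a c h n i = 0 := by
  rw [meanderCount_eq_ncard]
  have : walkSet a c h n i = ∅ := by
    ext w
    simp only [walkSet, Set.mem_setOf_eq, Set.mem_empty_iff_false, iff_false, not_and]
    rintro rfl h2 h3 h4
    have := h3 w.length
    rw [List.take_length] at this
    omega
  rw [this, Set.ncard_empty]

lemma walkP_append (a c h n : ℕ) (i s : ℤ) (w : List ℤ) :
    (w ++ [s]) ∈ walkSet a c h (n + 1) i ↔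
      (s = -(a : ℤ) ∨ s = (c : ℤ)) ∧ 0 ≤ i ∧ w ∈ walkSet a c h n (i - s) := by
  simp only [walkSet, Set.mem_setOf_eq, List.length_append, List.length_singleton,
    List.forall_mem_append, List.forall_mem_singleton, List.sum_append, List.sum_singleton]
  constructor
  · rintro ⟨hl, ⟨hmw, hs⟩, htake, hsum⟩
    have hlw : w.length = n := by omega
    refine ⟨hs, ?_, hlw, hmw, ?_, by omega⟩
    · have := htake (n + 1)
      rw [List.take_of_length_le (by simp [hlw]), List.sum_append, List.sum_singleton] at this
      omega
    · intro m
      rcases le_or_gt m w.length with hm | hm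
      · have := htake m
        rwa [List.take_append_of_le_length hm] at this
      · have := htake w.length
        rw [List.take_append_of_le_length le_rfl, List.take_length] at this
        rw [List.take_of_length_le hm.le]
        exact this
  · rintro ⟨hs, hi, hlw, hmw, htake, hsum⟩
    refine ⟨by omega, ⟨hmw, hs⟩, ?_, by omega⟩
    intro m
    rcases le_or_gt m w.length with hm | hm
    · rw [List.take_append_of_le_length hm]; exact htake m
    · rw [List.take_of_length_le (by simpa using by omega : (w ++ [s]).length ≤ m),
        List.sum_append, List.sum_singleton]
      omega

end MeanderAux

namespace MeanderAux

lemma mc_succ (a c h : ℕ) (hc : 0 < c) (n : ℕ) (i : ℤ) (hi : 0 ≤ i) :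
    meanderCount a c h (n + 1) i =
      meanderCount a c h n (i + a) + meanderCount a c h n (i - c) := by
  have hset : walkSet a c h (n + 1) i =
      (fun w => w ++ [-(a : ℤ)]) '' walkSet a c h n (i + a) ∪
      (fun w => w ++ [(c : ℤ)]) '' walkSet a c h n (i - c) := by
    ext w
    constructor
    · intro hw
      rcases List.eq_nil_or_concat w with rfl | ⟨l, t, rfl⟩
      · exact absurd hw.1 (by simp)
      · rw [List.concat_eq_append] at hw ⊢
        rw [walkP_append] at hw
        obtain ⟨ht, -, hl⟩ := hw
        rcases ht with rfl | rfl
        · left; exact ⟨l, by rwa [sub_neg_eq_add] at hl, rfl⟩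
        · right; exact ⟨l, hl, rfl⟩
    · rintro (⟨l, hl, rfl⟩ | ⟨l, hl, rfl⟩) <;> rw [walkP_append]
      · exact ⟨Or.inl rfl, hi, by rwa [sub_neg_eq_add]⟩
      · exact ⟨Or.inr rfl, hi, hl⟩
  have hinj1 : Function.Injective (fun w : List ℤ => w ++ [-(a : ℤ)]) := by
    intro x y hxy; simpa using hxy
  have hinj2 : Function.Injective (fun w : List ℤ => w ++ [(c : ℤ)]) := by
    intro x y hxy; simpa using hxy
  have hdisj : Disjoint ((fun w => w ++ [-(a : ℤ)]) '' walkSet a c h n (i + a))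
      ((fun w => w ++ [(c : ℤ)]) '' walkSet a c h n (i - c)) := by
    rw [Set.disjoint_left]
    rintro w ⟨l, -, rfl⟩ ⟨l', -, heq⟩
    simp only at heq
    have := (List.append_inj_right heq (by
      have := congrArg List.length heq
      simpa using this)).symm
    simp only [List.cons.injEq] at this
    omega
  rw [meanderCount_eq_ncard, meanderCount_eq_ncard, meanderCount_eq_ncard, hset,
    Set.ncard_union_eq hdisj ((walkSet_finite a c h n (i + a)).image _)
      ((walkSet_finite a c h n (i - c)).image _),
    Set.ncard_image_of_injective _ hinj1, Set.ncard_image_of_injective _ hinj2]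

/-- ℕ-indexed count. -/
lemma nc_succ (a c h : ℕ) (hc : 0 < c) (n i : ℕ) :
    meanderCount a c h (n + 1) (i : ℤ) =
      meanderCount a c h n ((i + a : ℕ) : ℤ) +
        (if c ≤ i then meanderCount a c h n ((i - c : ℕ) : ℤ) else 0) := by
  rw [mc_succ a c h hc n (i : ℤ) (by positivity)]
  have h1 : (i : ℤ) + a = ((i + a : ℕ) : ℤ) := by push_cast; ring
  rw [h1]
  congr 1
  split_ifs with hci
  · congr 1; omega
  · exact mc_neg a c h n _ (by omega)

lemma nc_zero (a c h i : ℕ) :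
    meanderCount a c h 0 (i : ℤ) = if i = h then 1 else 0 := by
  rw [mc_zero]
  simp [Nat.cast_inj]

end MeanderAux

namespace MeanderAux

open PowerSeries

/-- ℕ-indexed meander count. -/
noncomputable def ncount (a c h n i : ℕ) : ℕ := meanderCount a c h n (i : ℤ)

noncomputable def Tser (a c h : ℕ) (u : PowerSeries ℂ) (M : ℕ) : PowerSeries ℂ :=
  ∑ n ∈ Finset.range M, ∑ i ∈ Finset.range M,
    (ncount a c h n i : PowerSeries ℂ) * (X ^ (a * n) * u ^ i)

noncomputable def Hser (a c h : ℕ) (u : PowerSeries ℂ) : PowerSeries ℂ :=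
  PowerSeries.mk fun m => coeff m (Tser a c h u (m + 1))

noncomputable def Tf (a c h i M : ℕ) : PowerSeries ℂ :=
  ∑ n ∈ Finset.range M, (ncount a c h n i : PowerSeries ℂ) * X ^ (a * n)

lemma xpow_dvd_term (u : PowerSeries ℂ) (hu : constantCoeff u = 0) (j i : ℕ) :
    (X : PowerSeries ℂ) ^ (j + i) ∣ X ^ j * u ^ i := by
  rw [pow_add]
  exact mul_dvd_mul dvd_rfl (pow_dvd_pow_of_dvd (X_dvd_iff.mpr hu) i)

lemma coeff_term_eq_zero (u : PowerSeries ℂ) (hu : constantCoeff u = 0)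
    {m j i : ℕ} (hmi : m < j + i) : coeff m (X ^ j * u ^ i) = 0 :=
  X_pow_dvd_iff.mp (xpow_dvd_term u hu j i) m hmi

lemma coeff_nat_mul (k : ℕ) (f : PowerSeries ℂ) (m : ℕ) :
    coeff m ((k : PowerSeries ℂ) * f) = (k : ℂ) * coeff m f := by
  rw [← map_natCast (C (R := ℂ)) k, coeff_C_mul]

lemma coeff_Tser_canon (a c h : ℕ) (ha : 0 < a) (u : PowerSeries ℂ)
    (hu : constantCoeff u = 0) {m M : ℕ} (hM : m < M) :
    coeff m (Tser a c h u M) =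
      ∑ n ∈ Finset.range (m + 1), ∑ i ∈ Finset.range (m + 1),
        (ncount a c h n i : ℂ) * coeff m (X ^ (a * n) * u ^ i) := by
  rw [Tser, map_sum]
  rw [← Finset.sum_subset (Finset.range_subset_range.mpr hM)]
  · refine Finset.sum_congr rfl fun n _ => ?_
    rw [map_sum, ← Finset.sum_subset (Finset.range_subset_range.mpr hM)]
    · exact Finset.sum_congr rfl fun i _ => coeff_nat_mul _ _ _
    · intro i _ hi
      rw [coeff_nat_mul, coeff_term_eq_zero u hu (by simp at hi; omega), mul_zero]
  · intro n _ hn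
    rw [map_sum]
    refine Finset.sum_eq_zero fun i _ => ?_
    rw [coeff_nat_mul, coeff_term_eq_zero u hu (by simp at hn; nlinarith [Nat.one_le_iff_ne_zero.mpr ha.ne']), mul_zero]

lemma Hser_sub_dvd (a c h : ℕ) (ha : 0 < a) (u : PowerSeries ℂ)
    (hu : constantCoeff u = 0) {m M : ℕ} (hM : m < M) :
    (X : PowerSeries ℂ) ^ (m + 1) ∣ Hser a c h u - Tser a c h u M := by
  rw [X_pow_dvd_iff]
  intro k hk
  rw [map_sub, sub_eq_zero, Hser, coeff_mk,
    coeff_Tser_canon a c h ha u hu (Nat.lt_succ_self k),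
    coeff_Tser_canon a c h ha u hu (show k < M by omega)]

lemma coeff_Tf (a c h : ℕ) (ha : 0 < a) (i : ℕ) {k M : ℕ} (hk : k < M) :
    coeff k (Tf a c h i M) =
      coeff k (liftRootA a fun n => meanderCount a c h n (i : ℤ)) := by
  rw [liftRootA, coeff_mk, Tf, map_sum]
  have hterm : ∀ n, coeff k ((ncount a c h n i : PowerSeries ℂ) * X ^ (a * n)) =
      if k = a * n then (ncount a c h n i : ℂ) else 0 := by
    intro n
    rw [coeff_nat_mul, coeff_X_pow]
    split_ifs <;> simp
  simp only [hterm]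
  by_cases hd : a ∣ k
  · obtain ⟨q, rfl⟩ := hd
    rw [Finset.sum_eq_single q]
    · rw [if_pos rfl, if_pos (Dvd.intro q rfl)]
      congr 2
      exact (Nat.mul_div_cancel_left q ha).symm
    · intro n _ hn
      rw [if_neg]
      intro hh'
      exact hn (Nat.eq_of_mul_eq_mul_left ha hh'.symm)
    · intro hq
      exact absurd (Finset.mem_range.mpr (by nlinarith [Nat.one_le_iff_ne_zero.mpr ha.ne'])) hq
  · rw [if_neg hd, Finset.sum_eq_zero]
    intro n _
    rw [if_neg]
    intro hh'
    exact hd ⟨n, hh'⟩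

lemma Tf_sub_dvd (a c h : ℕ) (ha : 0 < a) (i : ℕ) {m M : ℕ} (hM : m < M) :
    (X : PowerSeries ℂ) ^ (m + 1) ∣
      (liftRootA a fun n => meanderCount a c h n (i : ℤ)) - Tf a c h i M := by
  rw [X_pow_dvd_iff]
  intro k hk
  rw [map_sub, sub_eq_zero, coeff_Tf a c h ha i (show k < M by omega)]

end MeanderAux

namespace MeanderAux

open PowerSeries Finset

lemma ncount_zero (a c h i : ℕ) : ncount a c h 0 i = if i = h then 1 else 0 := by
  simp only [ncount]; rw [nc_zero]

lemma ncount_succ (a c h : ℕ) (hc : 0 < c) {n i : ℕ} :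
    ncount a c h (n + 1) i =
      ncount a c h n (i + a) + if c ≤ i then ncount a c h n (i - c) else 0 := by
  simp only [ncount]
  rw [nc_succ a c h hc n i]

set_option maxHeartbeats 1600000 in
lemma R1 (a c h : ℕ) (ha : 0 < a) (hc : 0 < c) (u : PowerSeries ℂ)
    (hu : constantCoeff u = 0) :
    u ^ a * Hser a c h u =
      u ^ (a + h) + X ^ a * Hser a c h u -
        X ^ a * (∑ i ∈ range a, u ^ i * liftRootA a fun n => meanderCount a c h n (i : ℤ)) +
        X ^ a * u ^ (a + c) * Hser a c h u := by
  ext m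
  set K := m + h + a + c + 1 with hK
  set M := K + 1 with hM
  have hmM : m < M := by omega
  set I := Ideal.span {(X : PowerSeries ℂ) ^ (m + 1)} with hI
  set φ := Ideal.Quotient.mk I with hφ
  set SM : PowerSeries ℂ := ∑ i ∈ range a, u ^ i * Tf a c h i M with hSM
  -- step 1: enough to prove the equation mod X^(m+1)
  suffices hq : φ (u ^ a * Hser a c h u) =
      φ (u ^ (a + h) + X ^ a * Hser a c h u -
        X ^ a * (∑ i ∈ range a, u ^ i * liftRootA a fun n => meanderCount a c h n (i : ℤ)) +
        X ^ a * u ^ (a + c) * Hser a c h u) by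
    have hd := Ideal.mem_span_singleton.mp (Ideal.Quotient.eq.mp hq)
    have := X_pow_dvd_iff.mp hd m (Nat.lt_succ_self m)
    rw [map_sub, sub_eq_zero] at this
    exact this
  -- step 2: replace Hser, liftRootA by truncations
  have hH : φ (Hser a c h u) = φ (Tser a c h u M) :=
    Ideal.Quotient.eq.mpr (Ideal.mem_span_singleton.mpr (Hser_sub_dvd a c h ha u hu hmM))
  have hS : φ (∑ i ∈ range a, u ^ i * liftRootA a fun n => meanderCount a c h n (i : ℤ)) =
      φ SM := by
    rw [hSM, map_sum, map_sum]
    refine Finset.sum_congr rfl fun i _ => ?_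
    rw [map_mul, map_mul,
      Ideal.Quotient.eq.mpr (Ideal.mem_span_singleton.mpr (Tf_sub_dvd a c h ha i hmM))]
  -- the kill lemma
  have kill : ∀ n i : ℕ, m < a * n + i →
      φ (X ^ (a * n)) * φ (u ^ i) = 0 := by
    intro n i hni
    rw [← map_mul, hφ, Ideal.Quotient.eq_zero_iff_mem, hI, Ideal.mem_span_singleton]
    exact dvd_trans (pow_dvd_pow X (by omega)) (xpow_dvd_term u hu (a * n) i)
  -- expansion lemmas in the power series ring
  have E1 : u ^ a * Tser a c h u M =
      ∑ n ∈ range M, ∑ i ∈ range M,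
        (ncount a c h n i : PowerSeries ℂ) * (X ^ (a * n) * u ^ (i + a)) := by
    rw [Tser, Finset.mul_sum]
    refine Finset.sum_congr rfl fun n _ => ?_
    rw [Finset.mul_sum]
    refine Finset.sum_congr rfl fun i _ => ?_
    rw [pow_add]; ring
  have E2 : X ^ a * Tser a c h u M =
      ∑ n ∈ range M, ∑ i ∈ range M,
        (ncount a c h n i : PowerSeries ℂ) * (X ^ (a * (n + 1)) * u ^ i) := by
    rw [Tser, Finset.mul_sum]
    refine Finset.sum_congr rfl fun n _ => ?_
    rw [Finset.mul_sum]
    refine Finset.sum_congr rfl fun i _ => ?_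
    rw [show a * (n + 1) = a * n + a by ring, pow_add]; ring
  have E3 : X ^ a * u ^ (a + c) * Tser a c h u M =
      ∑ n ∈ range M, ∑ i ∈ range M,
        (ncount a c h n i : PowerSeries ℂ) * (X ^ (a * (n + 1)) * u ^ (i + a + c)) := by
    rw [Tser, Finset.mul_sum]
    refine Finset.sum_congr rfl fun n _ => ?_
    rw [Finset.mul_sum]
    refine Finset.sum_congr rfl fun i _ => ?_
    rw [show a * (n + 1) = a * n + a by ring, pow_add, show i + a + c = i + (a + c) by ring,
      pow_add]
    ring
  have E4 : X ^ a * SM =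
      ∑ i ∈ range a, ∑ n ∈ range M,
        (ncount a c h n i : PowerSeries ℂ) * (X ^ (a * (n + 1)) * u ^ i) := by
    rw [hSM, Finset.mul_sum]
    refine Finset.sum_congr rfl fun i _ => ?_
    rw [Tf, Finset.mul_sum, Finset.mul_sum]
    refine Finset.sum_congr rfl fun n _ => ?_
    rw [show a * (n + 1) = a * n + a by ring, pow_add]; ring
  -- the main finite computation in the quotient
  have kmain : (∑ n ∈ range M, ∑ i ∈ range M,
        (ncount a c h n i : PowerSeries ℂ ⧸ I) * (φ (X ^ (a * n)) * φ (u ^ (i + a))))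
      = φ (u ^ (a + h)) +
        (∑ n ∈ range M, ∑ i ∈ range M,
          (ncount a c h n i : PowerSeries ℂ ⧸ I) * (φ (X ^ (a * (n + 1))) * φ (u ^ i))) -
        (∑ i ∈ range a, ∑ n ∈ range M,
          (ncount a c h n i : PowerSeries ℂ ⧸ I) * (φ (X ^ (a * (n + 1))) * φ (u ^ i))) +
        (∑ n ∈ range M, ∑ i ∈ range M,
          (ncount a c h n i : PowerSeries ℂ ⧸ I) * (φ (X ^ (a * (n + 1))) * φ (u ^ (i + a + c)))) := by
    rw [hM, Finset.sum_range_succ'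
      (fun n => ∑ i ∈ range (K + 1),
        (ncount a c h n i : PowerSeries ℂ ⧸ I) * (φ (X ^ (a * n)) * φ (u ^ (i + a)))) K]
    have P0 : (∑ i ∈ range (K + 1),
        (ncount a c h 0 i : PowerSeries ℂ ⧸ I) * (φ (X ^ (a * 0)) * φ (u ^ (i + a))))
        = φ (u ^ (a + h)) := by
      have hit : ∀ i ∈ range (K + 1),
          (ncount a c h 0 i : PowerSeries ℂ ⧸ I) * (φ (X ^ (a * 0)) * φ (u ^ (i + a))) =
            if i = h then φ (X ^ (a * 0)) * φ (u ^ (i + a)) else 0 := by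
        intro i _
        rw [ncount_zero]
        split_ifs <;> simp
      rw [Finset.sum_congr rfl hit, Finset.sum_ite_eq' (range (K + 1)) h,
        if_pos (Finset.mem_range.mpr (by omega)), Nat.mul_zero, pow_zero, map_one, one_mul,
        show h + a = a + h by ring]
    have hrec : ∀ n ∈ range K, (∑ i ∈ range (K + 1),
        (ncount a c h (n + 1) i : PowerSeries ℂ ⧸ I) * (φ (X ^ (a * (n + 1))) * φ (u ^ (i + a))))
        = (∑ i ∈ range (K + 1),
            (ncount a c h n (i + a) : PowerSeries ℂ ⧸ I) * (φ (X ^ (a * (n + 1))) * φ (u ^ (i + a)))) +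
          (∑ i ∈ range (K + 1),
            ((if c ≤ i then ncount a c h n (i - c) else 0 : ℕ) : PowerSeries ℂ ⧸ I) *
              (φ (X ^ (a * (n + 1))) * φ (u ^ (i + a)))) := by
      intro n _
      rw [← Finset.sum_add_distrib]
      refine Finset.sum_congr rfl fun i _ => ?_
      rw [ncount_succ a c h hc]
      push_cast
      ring
    rw [Finset.sum_congr rfl hrec, Finset.sum_add_distrib]
    -- Term A
    have PA : (∑ n ∈ range K, ∑ i ∈ range (K + 1),
        (ncount a c h n (i + a) : PowerSeries ℂ ⧸ I) * (φ (X ^ (a * (n + 1))) * φ (u ^ (i + a))))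
        = (∑ n ∈ range (K + 1), ∑ i ∈ range (K + 1),
            (ncount a c h n i : PowerSeries ℂ ⧸ I) * (φ (X ^ (a * (n + 1))) * φ (u ^ i))) -
          (∑ i ∈ range a, ∑ n ∈ range (K + 1),
            (ncount a c h n i : PowerSeries ℂ ⧸ I) * (φ (X ^ (a * (n + 1))) * φ (u ^ i))) := by
      rw [Finset.sum_comm (s := range a) (t := range (K + 1)), ← Finset.sum_sub_distrib]
      have hsub : ∀ n ∈ range (K + 1),
          (∑ i ∈ range (K + 1),
            (ncount a c h n i : PowerSeries ℂ ⧸ I) * (φ (X ^ (a * (n + 1))) * φ (u ^ i))) -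
          (∑ i ∈ range a,
            (ncount a c h n i : PowerSeries ℂ ⧸ I) * (φ (X ^ (a * (n + 1))) * φ (u ^ i)))
          = ∑ i ∈ range (K + 1 - a),
            (ncount a c h n (i + a) : PowerSeries ℂ ⧸ I) * (φ (X ^ (a * (n + 1))) * φ (u ^ (i + a))) := by
        intro n _
        rw [← Finset.sum_sdiff (Finset.range_subset_range.mpr (show a ≤ K + 1 by omega)),
          show range (K + 1) \ range a = Finset.Ico a (K + 1) by
            ext x; simp only [Finset.mem_sdiff, Finset.mem_range, Finset.mem_Ico]; omega,
          add_sub_cancel_right, Finset.sum_Ico_eq_sum_range]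
        refine Finset.sum_congr (by congr 1) fun i _ => ?_
        rw [Nat.add_comm a i]
      rw [Finset.sum_congr rfl hsub]
      -- now both sides are sums of the same inner expression; adjust ranges using kill
      rw [← Finset.sum_subset (Finset.range_subset_range.mpr (show K ≤ K + 1 by omega))]
      · refine Finset.sum_congr rfl fun n _ => ?_
        rw [← Finset.sum_subset (Finset.range_subset_range.mpr (show K + 1 - a ≤ K + 1 by omega))]
        intro i _ hi
        rw [kill (n + 1) (i + a) (by simp only [Finset.mem_range] at hi ⊢; omega), mul_zero]
      · intro n _ hn
        refine Finset.sum_eq_zero fun i _ => ?_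
        rw [kill (n + 1) (i + a)
          (by simp only [Finset.mem_range] at hn; nlinarith [Nat.one_le_iff_ne_zero.mpr ha.ne']),
          mul_zero]
    -- Term B
    have PB : (∑ n ∈ range K, ∑ i ∈ range (K + 1),
        ((if c ≤ i then ncount a c h n (i - c) else 0 : ℕ) : PowerSeries ℂ ⧸ I) *
          (φ (X ^ (a * (n + 1))) * φ (u ^ (i + a))))
        = ∑ n ∈ range (K + 1), ∑ i ∈ range (K + 1),
            (ncount a c h n i : PowerSeries ℂ ⧸ I) * (φ (X ^ (a * (n + 1))) * φ (u ^ (i + a + c))) := by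
      have hinner : ∀ n ∈ range K, (∑ i ∈ range (K + 1),
          ((if c ≤ i then ncount a c h n (i - c) else 0 : ℕ) : PowerSeries ℂ ⧸ I) *
            (φ (X ^ (a * (n + 1))) * φ (u ^ (i + a))))
          = ∑ i ∈ range (K + 1 - c),
              (ncount a c h n i : PowerSeries ℂ ⧸ I) * (φ (X ^ (a * (n + 1))) * φ (u ^ (i + a + c))) := by
        intro n _
        rw [← Finset.sum_subset (show Finset.Ico c (K + 1) ⊆ range (K + 1) by
            intro x hx; simp only [Finset.mem_Ico] at hx; simp only [Finset.mem_range]; omega)]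
        · rw [Finset.sum_Ico_eq_sum_range]
          refine Finset.sum_congr (by congr 1) fun i _ => ?_
          rw [if_pos (by omega), show c + i - c = i by omega, show c + i + a = i + a + c by omega]
        · intro i hi hni
          have hic : ¬ c ≤ i := by
            simp only [Finset.mem_range] at hi
            simp only [Finset.mem_Ico, not_and, not_lt] at hni
            intro hci; exact absurd (hni hci) (by omega)
          rw [if_neg hic, Nat.cast_zero, zero_mul]
      rw [Finset.sum_congr rfl hinner]
      rw [← Finset.sum_subset (Finset.range_subset_range.mpr (show K ≤ K + 1 by omega))]
      · refine Finset.sum_congr rfl fun n _ => ?_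
        rw [← Finset.sum_subset (Finset.range_subset_range.mpr (show K + 1 - c ≤ K + 1 by omega))]
        intro i _ hi
        rw [kill (n + 1) (i + a + c) (by simp only [Finset.mem_range] at hi ⊢; omega), mul_zero]
      · intro n _ hn
        refine Finset.sum_eq_zero fun i _ => ?_
        rw [kill (n + 1) (i + a + c)
          (by simp only [Finset.mem_range] at hn; nlinarith [Nat.one_le_iff_ne_zero.mpr ha.ne']),
          mul_zero]
    rw [P0, PA, PB]
    ring
  -- assemble everything
  have e1 : φ (u ^ a * Hser a c h u) =
      ∑ n ∈ range M, ∑ i ∈ range M,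
        (ncount a c h n i : PowerSeries ℂ ⧸ I) * (φ (X ^ (a * n)) * φ (u ^ (i + a))) := by
    rw [map_mul, hH, ← map_mul, E1]
    simp only [map_sum, map_mul, map_natCast]
  have e2 : φ (X ^ a * Hser a c h u) =
      ∑ n ∈ range M, ∑ i ∈ range M,
        (ncount a c h n i : PowerSeries ℂ ⧸ I) * (φ (X ^ (a * (n + 1))) * φ (u ^ i)) := by
    rw [map_mul, hH, ← map_mul, E2]
    simp only [map_sum, map_mul, map_natCast]
  have e3 : φ (X ^ a * u ^ (a + c) * Hser a c h u) =
      ∑ n ∈ range M, ∑ i ∈ range M,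
        (ncount a c h n i : PowerSeries ℂ ⧸ I) * (φ (X ^ (a * (n + 1))) * φ (u ^ (i + a + c))) := by
    rw [map_mul, hH, ← map_mul, E3]
    simp only [map_sum, map_mul, map_natCast]
  have e4 : φ (X ^ a *
      (∑ i ∈ range a, u ^ i * liftRootA a fun n => meanderCount a c h n (i : ℤ))) =
      ∑ i ∈ range a, ∑ n ∈ range M,
        (ncount a c h n i : PowerSeries ℂ ⧸ I) * (φ (X ^ (a * (n + 1))) * φ (u ^ i)) := by
    rw [map_mul, hS, ← map_mul, E4]
    simp only [map_sum, map_mul, map_natCast]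
  simp only [map_add, map_sub]
  rw [e1, e2, e3, e4, kmain]

lemma keyEq (a c h : ℕ) (ha : 0 < a) (hc : 0 < c) (u : PowerSeries ℂ)
    (hu : constantCoeff u = 0)
    (hker : u ^ a = X ^ a * (1 + u ^ (a + c))) :
    X ^ a * (∑ i ∈ Finset.range a,
        u ^ i * liftRootA a fun n => meanderCount a c h n (i : ℤ)) = u ^ (a + h) := by
  have hr := R1 a c h ha hc u hu
  linear_combination hr - Hser a c h u * hker

end MeanderAux

set_option maxHeartbeats 1000000

/-- Schur polynomial closed form for meanders.  For walks on `ℕ` with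
steps `{−a,+c}` (coprime, positive) starting at altitude `h ≥ a`, with `u₁,…,u_a` the
small roots of `1 − z(u^{−a}+u^c) = 0` (i.e. `u^a = z(1+u^{a+c})`, taken as power
series in `x = z^{1/a}` vanishing at 0), the generating function of walks ending at
altitude `i` equals `((−1)^{a−i−1}/z)·s_{(h+1,1^{a−i−1},0^i)}(u₁,…,u_a)`, stated via
the bialternant formula with the Vandermonde denominator cleared. -/
theorem schur_closed_form_meanders (a c h : ℕ) (ha : 0 < a) (hc : 0 < c)
    (hcop : Nat.Coprime a c) (hh : a ≤ h)
    (u : Fin a → PowerSeries ℂ)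
    (hu0 : ∀ j, PowerSeries.constantCoeff (u j) = 0)
    (hker : ∀ j, (u j) ^ a = PowerSeries.X ^ a * (1 + (u j) ^ (a + c)))
    (hne : ∀ j k, j ≠ k → u j ≠ u k) :
    ∀ i : Fin a,
      PowerSeries.X ^ a *
          Matrix.det (Matrix.of fun j k : Fin a => (u k) ^ (a - 1 - (j : ℕ))) *
          liftRootA a (fun n => meanderCount a c h n (i : ℤ)) =
        (-1 : PowerSeries ℂ) ^ (a - (i : ℕ) - 1) *
          Matrix.det (Matrix.of fun j k : Fin a =>
            (u k) ^ (schurLambda a h (i : ℕ) j + (a - 1 - (j : ℕ)))) := by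
  intro i
  obtain ⟨a', rfl⟩ : ∃ a', a = a' + 1 := ⟨a - 1, by omega⟩
  have hia : (i : ℕ) ≤ a' := by omega
  set A : Matrix (Fin (a' + 1)) (Fin (a' + 1)) (PowerSeries ℂ) :=
    Matrix.of fun j k => u j ^ (k : ℕ) with hA
  set v : Fin (a' + 1) → PowerSeries ℂ := fun j => u j ^ ((a' + 1) + h) with hv
  set F : Fin (a' + 1) → PowerSeries ℂ :=
    fun k => liftRootA (a' + 1) fun n => meanderCount (a' + 1) c h n (k : ℤ) with hF
  -- the kernel linear system
  have hAv : A.mulVec (fun k => X ^ (a' + 1) * F k) = v := by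
    funext j
    have hk := MeanderAux.keyEq (a' + 1) c h ha hc (u j) (hu0 j) (hker j)
    rw [← Fin.sum_univ_eq_sum_range
      (fun i => u j ^ i * liftRootA (a' + 1) fun n => meanderCount (a' + 1) c h n (i : ℤ))
      (a' + 1)] at hk
    simp only [Matrix.mulVec, dotProduct]
    show _ = u j ^ (a' + 1 + h)
    rw [← hk, Finset.mul_sum]
    refine Finset.sum_congr rfl fun k _ => ?_
    simp only [hA, hF, Matrix.of_apply]
    ring
  -- Cramer's rule
  have hcram : (Matrix.updateCol A i v).det = Matrix.det A * (X ^ (a' + 1) * F i) := by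
    have h1 : Matrix.cramer A v = Matrix.det A • ((fun k => X ^ (a' + 1) * F k) : Fin (a' + 1) → PowerSeries ℂ) := by
      rw [← hAv, Matrix.cramer_eq_adjugate_mulVec, Matrix.mulVec_mulVec, Matrix.adjugate_mul,
        Matrix.smul_mulVec, Matrix.one_mulVec]
    have h2 := congrFun h1 i
    rw [Matrix.cramer_apply] at h2
    simpa using h2
  -- permutations
  set r : Fin (a' + 1) := ⟨a' - (i : ℕ), by omega⟩ with hr
  set σ : Equiv.Perm (Fin (a' + 1)) := Fin.revPerm * (Fin.cycleRange r)⁻¹ with hσ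
  have hσval : ∀ j : Fin (a' + 1), (σ j : ℕ) =
      if (j : ℕ) = 0 then (i : ℕ)
      else if (j : ℕ) ≤ a' - (i : ℕ) then a' + 1 - (j : ℕ) else a' - (j : ℕ) := by
    intro j
    rw [hσ, Equiv.Perm.mul_apply]
    split_ifs with hj0 hj1
    · have hj : j = 0 := by ext; exact hj0
      have hπ : (Fin.cycleRange r)⁻¹ j = r := by
        rw [hj, Equiv.Perm.inv_def, Equiv.symm_apply_eq, Fin.cycleRange_self]
      rw [hπ]
      show (Fin.rev r : ℕ) = (i : ℕ)
      rw [Fin.val_rev, hr]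
      simp
      omega
    · have hj1' : 1 ≤ (j : ℕ) := by omega
      set y : Fin (a' + 1) := ⟨(j : ℕ) - 1, by omega⟩ with hy
      have hπ : (Fin.cycleRange r)⁻¹ j = y := by
        rw [Equiv.Perm.inv_def, Equiv.symm_apply_eq,
          Fin.cycleRange_of_lt (show y < r by rw [hy, hr, Fin.lt_def]; simp; omega)]
        ext
        rw [Fin.val_add_one_of_lt (show y < Fin.last a' by rw [hy, Fin.lt_def]; simp; omega)]
        simp [hy]
        omega
      rw [hπ]
      show (Fin.rev y : ℕ) = _
      rw [Fin.val_rev, hy]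
      simp
      omega
    · have hπ : (Fin.cycleRange r)⁻¹ j = j := by
        rw [Equiv.Perm.inv_def, Equiv.symm_apply_eq,
          Fin.cycleRange_of_gt (show r < j by rw [hr, Fin.lt_def]; simp; omega)]
      rw [hπ]
      show (Fin.rev j : ℕ) = _
      rw [Fin.val_rev]
      omega
  -- identify the Schur matrix
  have hN : (Matrix.of fun j k : Fin (a' + 1) =>
      (u k) ^ (schurLambda (a' + 1) h (i : ℕ) j + (a' + 1 - 1 - (j : ℕ))))
      = ((Matrix.updateCol A i v).transpose).submatrix σ id := by
    apply Matrix.ext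
    intro j k
    have hjlt : (j : ℕ) < a' + 1 := j.isLt
    rw [Matrix.submatrix_apply, Matrix.transpose_apply, Matrix.updateCol_apply,
      Matrix.of_apply, id_eq]
    have hsv := hσval j
    by_cases hj0 : (j : ℕ) = 0
    · rw [if_pos hj0] at hsv
      rw [if_pos (by ext; exact hsv), show v k = u k ^ (a' + 1 + h) from rfl,
        schurLambda, if_pos hj0]
      exact congrArg (u k ^ ·) (by omega)
    · rw [if_neg hj0] at hsv
      by_cases hj1 : (j : ℕ) ≤ a' - (i : ℕ)
      · rw [if_pos hj1] at hsv
        rw [if_neg (by intro he; rw [he] at hsv; omega), hA, Matrix.of_apply, hsv,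
          schurLambda, if_neg hj0, if_pos (by omega)]
        exact congrArg (u k ^ ·) (by omega)
      · rw [if_neg hj1] at hsv
        rw [if_neg (by intro he; rw [he] at hsv; omega), hA, Matrix.of_apply, hsv,
          schurLambda, if_neg hj0, if_neg (by omega)]
        exact congrArg (u k ^ ·) (by omega)
  -- identify the Vandermonde-type matrix
  have hG : (Matrix.of fun j k : Fin (a' + 1) => (u k) ^ (a' + 1 - 1 - (j : ℕ)))
      = (Matrix.transpose A).submatrix Fin.revPerm id := by
    apply Matrix.ext
    intro j k
    have hjlt : (j : ℕ) < a' + 1 := j.isLt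
    rw [Matrix.submatrix_apply, Matrix.transpose_apply, hA, Matrix.of_apply, Matrix.of_apply,
      id_eq, Fin.revPerm_apply, Fin.val_rev]
    exact congrArg (u k ^ ·) (by omega)
  -- sign bookkeeping
  have hsgn : Equiv.Perm.sign σ =
      (-1) ^ (a' - (i : ℕ)) * Equiv.Perm.sign (Fin.revPerm (n := a' + 1)) := by
    rw [hσ, Equiv.Perm.sign_mul, Equiv.Perm.sign_inv, Fin.sign_cycleRange]
    rw [show (r : ℕ) = a' - (i : ℕ) from rfl]
    exact mul_comm _ _
  have hsgnR : ((Equiv.Perm.sign σ : ℤ) : PowerSeries ℂ) =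
      (-1 : PowerSeries ℂ) ^ (a' - (i : ℕ)) *
        ((Equiv.Perm.sign (Fin.revPerm (n := a' + 1)) : ℤ) : PowerSeries ℂ) := by
    rw [hsgn]
    push_cast
    ring
  have hexp : a' + 1 - (i : ℕ) - 1 = a' - (i : ℕ) := by omega
  have hsq : ((-1 : PowerSeries ℂ)) ^ (a' - (i : ℕ)) *
      ((-1 : PowerSeries ℂ)) ^ (a' - (i : ℕ)) = 1 := by
    rw [← mul_pow]
    norm_num
  rw [hexp, hG, hN, Matrix.det_permute, Matrix.det_permute, Matrix.det_transpose,
    Matrix.det_transpose, hcram, hsgnR]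
  linear_combination (-(((Equiv.Perm.sign (Fin.revPerm (n := a' + 1)) : ℤ) : PowerSeries ℂ) *
    Matrix.det A * X ^ (a' + 1) * F i)) * hsq
end
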